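/- arXiv:1804.06513 — 2 statements merged into one kernel-verified Lean document; each statement's English description precedes it below -/
import Mathlib

section
/- Let J be a 2-torsion free and (n−1)-torsion free Jordan ring with nontrivial idempotent e satisfying conditions (i)–(iii), and D : J → J an n-multiplicative derivation with D(e) = 0. Then D is additive on J_{1/2}: D(a + b) = D(a) + D(b) for all a, b ∈ J_{1/2}. -/
/-- Peirce 1-component relative to `e`: elements `x` with `e*x = x`. -/
def peirce1 {J : Type*} [Mul J] (e : J) : Set J := {x | e * x = x}

/-- Peirce 1/2-component relative to `e`: elements `x` with `e*x = (1/2)x`, i.e. `e*x + e*x = x`. -/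
def peirceHalf {J : Type*} [Mul J] [Add J] (e : J) : Set J := {x | e * x + e * x = x}

/-- Peirce 0-component relative to `e`: elements `x` with `e*x = 0`. -/
def peirce0 {J : Type*} [Mul J] [Zero J] (e : J) : Set J := {x | e * x = 0}

/-- The right-normed nonassociative monomial `x₁(x₂(⋯(x_{n-1}x_n)⋯))` on a list of arguments. -/
def rnm {J : Type*} [Mul J] [Zero J] : List J → J
  | [] => 0
  | [x] => x
  | x :: y :: l => x * rnm (y :: l)

/-- `d` is an `n`-multiplicative derivation (w.r.t. the right-normed monomial of degree `n`):
`d(m(x₁,…,xₙ)) = Σᵢ m(x₁,…,d(xᵢ),…,xₙ)`. -/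
def IsNDer {J : Type*} [NonUnitalNonAssocRing J] (n : ℕ) (d : J → J) : Prop :=
  ∀ l : List J, l.length = n →
    d (rnm l) = ∑ i ∈ Finset.range n, rnm (l.set i (d (l.getD i 0)))

namespace NDer

variable {J : Type*} [NonUnitalNonAssocCommRing J]

def applyW : List J → J → J
  | [], x => x
  | t :: l, x => t * applyW l x

@[simp] lemma applyW_nil (x : J) : applyW [] x = x := rfl
@[simp] lemma applyW_cons (t : J) (l : List J) (x : J) :
    applyW (t :: l) x = t * applyW l x := rfl

lemma applyW_append (l₁ l₂ : List J) (x : J) :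
    applyW (l₁ ++ l₂) x = applyW l₁ (applyW l₂ x) := by
  induction l₁ with
  | nil => simp
  | cons a l ih => simp [ih]

lemma applyW_add (l : List J) (x y : J) :
    applyW l (x + y) = applyW l x + applyW l y := by
  induction l with
  | nil => simp
  | cons a l ih => simp [ih, mul_add]

@[simp] lemma applyW_zero (l : List J) : applyW l (0 : J) = 0 := by
  induction l with
  | nil => simp
  | cons a l ih => simp [ih]

lemma applyW_sub (l : List J) (x y : J) :
    applyW l (x - y) = applyW l x - applyW l y := by
  induction l with
  | nil => simp
  | cons a l ih => simp [ih, mul_sub]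

lemma rnm_cons_ne (a : J) (l : List J) (h : l ≠ []) :
    rnm (a :: l) = a * rnm l := by
  cases l with
  | nil => exact absurd rfl h
  | cons b l => rfl

lemma rnm_concat (l : List J) (x : J) : rnm (l ++ [x]) = applyW l x := by
  induction l with
  | nil => rfl
  | cons a l ih =>
    rw [List.cons_append, rnm_cons_ne a _ (by simp), ih, applyW_cons]

lemma rnm_mid_zero (l₁ l₂ : List J) : rnm (l₁ ++ 0 :: l₂) = 0 := by
  induction l₁ with
  | nil =>
    cases l₂ with
    | nil => rfl
    | cons b l => rw [List.nil_append, rnm_cons_ne 0 _ (by simp), zero_mul]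
  | cons a l ih =>
    rw [List.cons_append, rnm_cons_ne a _ (by simp), ih, mul_zero]


section Peirce
variable (e : J)
variable (hJordan : ∀ x y : J, ((x * x) * y) * x = (x * x) * (y * x))
    (h2 : ∀ x : J, x + x = 0 → x = 0)
    (hid : e * e = e)

include h2 in
lemma twocancel {x y : J} (h : x + x = y + y) : x = y := by
  have hx : (x - y) + (x - y) = 0 := by
    have : (x - y) + (x - y) = (x + x) - (y + y) := by abel
    rw [this, h, sub_self]
  have := h2 _ hx
  exact sub_eq_zero.mp this

include hJordan h2 in
lemma L1 (t y : J) :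
    ((e*e)*y)*t + ((e*t)*y)*e + ((t*e)*y)*e + ((t*t)*y)*t
      = (e*e)*(y*t) + (e*t)*(y*e) + (t*e)*(y*e) + (t*t)*(y*t) := by
  have A := hJordan (e + t) y
  have B := hJordan (e - t) y
  have hAB : (((e+t)*(e+t))*y)*(e+t) - (((e-t)*(e-t))*y)*(e-t)
      = ((e+t)*(e+t))*(y*(e+t)) - ((e-t)*(e-t))*(y*(e-t)) := by rw [A, B]
  apply twocancel h2
  calc (((e*e)*y)*t + ((e*t)*y)*e + ((t*e)*y)*e + ((t*t)*y)*t)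
        + (((e*e)*y)*t + ((e*t)*y)*e + ((t*e)*y)*e + ((t*t)*y)*t)
      = (((e+t)*(e+t))*y)*(e+t) - (((e-t)*(e-t))*y)*(e-t) := by
        simp only [add_mul, mul_add, sub_mul, mul_sub]; abel
    _ = ((e+t)*(e+t))*(y*(e+t)) - ((e-t)*(e-t))*(y*(e-t)) := hAB
    _ = ((e*e)*(y*t) + (e*t)*(y*e) + (t*e)*(y*e) + (t*t)*(y*t))
        + ((e*e)*(y*t) + (e*t)*(y*e) + (t*e)*(y*e) + (t*t)*(y*t)) := by
        simp only [add_mul, mul_add, sub_mul, mul_sub]; abel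

include hJordan h2 hid in
lemma L2 (t y : J) :
    ((e*t)*y)*t + ((t*e)*y)*t + ((t*t)*y)*e
      = (e*t)*(y*t) + (t*e)*(y*t) + (t*t)*(y*e) := by
  have A := hJordan (e + t) y
  have B := hJordan (e - t) y
  have hAB : (((e+t)*(e+t))*y)*(e+t) + (((e-t)*(e-t))*y)*(e-t)
      = ((e+t)*(e+t))*(y*(e+t)) + ((e-t)*(e-t))*(y*(e-t)) := by rw [A, B]
  have key : (((e*e)*y)*e + ((e*t)*y)*t + ((t*e)*y)*t + ((t*t)*y)*e)
      + (((e*e)*y)*e + ((e*t)*y)*t + ((t*e)*y)*t + ((t*t)*y)*e)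
      = ((e*e)*(y*e) + (e*t)*(y*t) + (t*e)*(y*t) + (t*t)*(y*e))
      + ((e*e)*(y*e) + (e*t)*(y*t) + (t*e)*(y*t) + (t*t)*(y*e)) := by
    calc (((e*e)*y)*e + ((e*t)*y)*t + ((t*e)*y)*t + ((t*t)*y)*e)
        + (((e*e)*y)*e + ((e*t)*y)*t + ((t*e)*y)*t + ((t*t)*y)*e)
        = (((e+t)*(e+t))*y)*(e+t) + (((e-t)*(e-t))*y)*(e-t) := by
          simp only [add_mul, mul_add, sub_mul, mul_sub]; abel
      _ = ((e+t)*(e+t))*(y*(e+t)) + ((e-t)*(e-t))*(y*(e-t)) := hAB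
      _ = ((e*e)*(y*e) + (e*t)*(y*t) + (t*e)*(y*t) + (t*t)*(y*e))
        + ((e*e)*(y*e) + (e*t)*(y*t) + (t*e)*(y*t) + (t*t)*(y*e)) := by
          simp only [add_mul, mul_add, sub_mul, mul_sub]; abel
  have key2 := twocancel h2 key
  have hcanc : ((e*e)*y)*e = (e*e)*(y*e) := by
    rw [hid, mul_comm (e*y) e, mul_comm y e]
  -- cancel the common term
  have := key2
  rw [hcanc] at this
  -- now (e*e)*(y*e) + X = (e*e)*(y*e) + Y  after rearranging
  have h' : (e*e)*(y*e) + (((e*t)*y)*t + ((t*e)*y)*t + ((t*t)*y)*e)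
      = (e*e)*(y*e) + ((e*t)*(y*t) + (t*e)*(y*t) + (t*t)*(y*e)) := by
    calc (e*e)*(y*e) + (((e*t)*y)*t + ((t*e)*y)*t + ((t*t)*y)*e)
        = (e*e)*(y*e) + ((e*t)*y)*t + ((t*e)*y)*t + ((t*t)*y)*e := by abel
      _ = (e*e)*(y*e) + (e*t)*(y*t) + (t*e)*(y*t) + (t*t)*(y*e) := this
      _ = (e*e)*(y*e) + ((e*t)*(y*t) + (t*e)*(y*t) + (t*t)*(y*e)) := by abel
  exact add_left_cancel h'


include hJordan h2 in
lemma L1three (t y : J) :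
    ((e*e)*y)*t + ((e*t)*y)*e + ((t*e)*y)*e
      = (e*e)*(y*t) + (e*t)*(y*e) + (t*e)*(y*e) := by
  have h := L1 e hJordan h2 t y
  have hj := hJordan t y
  rw [hj] at h
  have h' : (((e*e)*y)*t + ((e*t)*y)*e + ((t*e)*y)*e) + (t*t)*(y*t)
      = ((e*e)*(y*t) + (e*t)*(y*e) + (t*e)*(y*e)) + (t*t)*(y*t) := by
    calc (((e*e)*y)*t + ((e*t)*y)*e + ((t*e)*y)*e) + (t*t)*(y*t)
        = ((e*e)*y)*t + ((e*t)*y)*e + ((t*e)*y)*e + (t*t)*(y*t) := by abel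
      _ = (e*e)*(y*t) + (e*t)*(y*e) + (t*e)*(y*e) + (t*t)*(y*t) := h
      _ = ((e*e)*(y*t) + (e*t)*(y*e) + (t*e)*(y*e)) + (t*t)*(y*t) := by abel
  exact add_right_cancel h'

include hJordan h2 hid in
lemma F0 {v : J} (hv : e * v = 0) (y : J) : (e*y)*v = e*(y*v) := by
  have h := L1three e hJordan h2 v y
  rw [hid, hv, mul_comm v e, hv] at h
  simpa using h

include hJordan h2 hid in
lemma F1 {u : J} (hu : e * u = u) (y : J) : e*(u*y) = u*(e*y) := by
  have h := L1three e hJordan h2 u y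
  rw [hid, hu, mul_comm u e, hu] at h
  rw [mul_comm (e*y) u, mul_comm (u*y) e, mul_comm y u, mul_comm y e] at h
  have h' : e*(u*y) - u*(e*y)
      = (u*(e*y) + e*(u*y) + e*(u*y)) - (e*(u*y) + u*(e*y) + u*(e*y)) := by abel
  rw [h, sub_self] at h'
  exact sub_eq_zero.mp h'

include hJordan h2 hid in
lemma Pa {u v : J} (hu : e * u = u) (hv : e * v = 0) : u * v = 0 := by
  have ha : (e*u)*v = e*(u*v) := F0 e hJordan h2 hid hv u
  rw [hu] at ha
  have hb : e*(u*v) = u*(e*v) := F1 e hJordan h2 hid hu v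
  rw [hv, mul_zero] at hb
  rw [ha, hb]

include hJordan h2 hid in
lemma Pb {v w : J} (hv : e * v = 0) (hw : e * w = 0) : e * (v * w) = 0 := by
  have h1 : (e*v)*w = e*(v*w) := F0 e hJordan h2 hid hw v
  rw [hv, zero_mul] at h1
  exact h1.symm

include hJordan h2 hid in
lemma Pc {v q : J} (hv : e * v = 0) (hq : e*q + e*q = q) :
    e*(v*q) + e*(v*q) = v*q := by
  have h1 : (e*q)*v = e*(q*v) := F0 e hJordan h2 hid hv q
  calc e*(v*q) + e*(v*q) = e*(q*v) + e*(q*v) := by rw [mul_comm v q]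
    _ = (e*q)*v + (e*q)*v := by rw [h1]
    _ = (e*q + e*q)*v := by rw [add_mul]
    _ = q*v := by rw [hq]
    _ = v*q := mul_comm q v

include hJordan h2 hid in
lemma Pd {u w : J} (hu : e * u = u) (hw : e * w = w) : e * (u * w) = u * w := by
  have := F1 e hJordan h2 hid hu w
  rw [hw] at this
  exact this

include hJordan h2 hid in
lemma Pe {u q : J} (hu : e * u = u) (hq : e*q + e*q = q) :
    e*(u*q) + e*(u*q) = u*q := by
  have h1 : e*(u*q) = u*(e*q) := F1 e hJordan h2 hid hu q
  rw [h1, ← mul_add, hq]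

include hJordan h2 hid in
lemma Cxy {p q : J} (hp : e*p + e*p = p) (hq : e*q + e*q = q) (w : J) :
    ((p*q)*w)*e = (p*q)*(w*e) := by
  have Cx : ∀ x : J, (e*x + e*x = x) → ∀ w : J, ((x*x)*w)*e = (x*x)*(w*e) := by
    intro x hx w
    have h := L2 e hJordan h2 hid x w
    rw [mul_comm x e] at h
    have hl : ((e*x)*w)*x + ((e*x)*w)*x = (x*w)*x := by
      rw [← add_mul, ← add_mul, hx]
    have hr : (e*x)*(w*x) + (e*x)*(w*x) = x*(w*x) := by
      rw [← add_mul, hx]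
    rw [show ((e*x)*w)*x + ((e*x)*w)*x + ((x*x)*w)*e
        = (((e*x)*w)*x + ((e*x)*w)*x) + ((x*x)*w)*e by abel,
      show (e*x)*(w*x) + (e*x)*(w*x) + (x*x)*(w*e)
        = ((e*x)*(w*x) + (e*x)*(w*x)) + (x*x)*(w*e) by abel, hl, hr] at h
    have hc : (x*w)*x = x*(w*x) := by
      rw [mul_comm (x*w) x, mul_comm w x]
    rw [hc] at h
    exact add_left_cancel h
  have hpq : e*(p+q) + e*(p+q) = (p+q) := by
    simp only [mul_add]
    calc e*p + e*q + (e*p + e*q) = (e*p + e*p) + (e*q + e*q) := by abel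
      _ = p + q := by rw [hp, hq]
  have hsum := Cx (p+q) hpq w
  have hP := Cx p hp w
  have hQ := Cx q hq w
  have hexp : (p+q)*(p+q) = p*p + (p*q + p*q) + q*q := by
    rw [mul_add, add_mul, add_mul, mul_comm q p]; abel
  rw [hexp] at hsum
  simp only [add_mul, mul_add] at hsum
  rw [hP, hQ] at hsum
  apply twocancel h2
  have h3 : (((p*q)*w)*e + ((p*q)*w)*e) - ((p*q)*(w*e) + (p*q)*(w*e))
      = ((p*p)*(w*e) + (((p*q)*w)*e + ((p*q)*w)*e) + (q*q)*(w*e))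
        - ((p*p)*(w*e) + ((p*q)*(w*e) + (p*q)*(w*e)) + (q*q)*(w*e)) := by abel
  rw [hsum, sub_self] at h3
  have := sub_eq_zero.mp h3
  exact this

include hJordan h2 hid in
lemma Pg {p q : J} (hp : e*p + e*p = p) (hq : e*q + e*q = q) :
    e*(e*(p*q)) = e*(p*q) := by
  have h := Cxy e hJordan h2 hid hp hq e
  rw [hid, mul_comm (p*q) e, mul_comm (e*(p*q)) e] at h
  exact h

include hJordan h2 hid in
lemma Pi' {t p q : J} (ht : e * t = 0) (hp : e*p + e*p = p) (hq : e*q + e*q = q) :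
    e * (t * (p*q)) = 0 := by
  have h1 : (e*(p*q))*t = e*((p*q)*t) := F0 e hJordan h2 hid ht (p*q)
  have h2' : (e*(p*q))*t = 0 := by
    have hm1 : e * (e*(p*q)) = e*(p*q) := Pg e hJordan h2 hid hp hq
    exact Pa e hJordan h2 hid hm1 ht
  rw [mul_comm t (p*q), ← h1, h2']

include hJordan h2 hid in
lemma PP (x : J) :
    e*x + e*(e*(e*x)) + e*(e*(e*x)) = e*(e*x) + e*(e*x) + e*(e*x) := by
  have h := L1three e hJordan h2 x e
  simp only [hid] at h
  rw [mul_comm x e] at h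
  rw [mul_comm (e*x) e] at h
  rw [mul_comm (e*(e*x)) e] at h
  exact h


end Peirce

section Der
variable {J : Type*} [NonUnitalNonAssocCommRing J]

def Lk (e : J) : ℕ → J → J
  | 0, x => x
  | k+1, x => e * Lk e k x

def pw : ℕ → J → J
  | 0, b => b
  | k+1, b => pw k b + pw k b

variable (e : J)

@[simp] lemma Lk_zero_k (x : J) : Lk e 0 x = x := rfl
@[simp] lemma Lk_succ (k : ℕ) (x : J) : Lk e (k+1) x = e * Lk e k x := rfl

lemma Lk_succ' (k : ℕ) (x : J) : Lk e (k+1) x = Lk e k (e * x) := by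
  induction k generalizing x with
  | zero => rfl
  | succ k ih =>
    calc Lk e (k+1+1) x = e * Lk e (k+1) x := rfl
      _ = e * Lk e k (e*x) := by rw [ih]
      _ = Lk e (k+1) (e*x) := rfl

@[simp] lemma Lk_zero (k : ℕ) : Lk e k (0:J) = 0 := by
  induction k with
  | zero => rfl
  | succ k ih => simp [ih]

lemma Lk_add (k : ℕ) (x y : J) : Lk e k (x+y) = Lk e k x + Lk e k y := by
  induction k with
  | zero => rfl
  | succ k ih => simp [ih, mul_add]

lemma Lk_sub (k : ℕ) (x y : J) : Lk e k (x-y) = Lk e k x - Lk e k y := by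
  induction k with
  | zero => rfl
  | succ k ih => simp [ih, mul_sub]

variable (hid : e * e = e)

include hid in
lemma Lk_e (k : ℕ) : Lk e k e = e := by
  induction k with
  | zero => rfl
  | succ k ih => simp [ih, hid]

include hid in
lemma Lk_E2 (k : ℕ) : Lk e k (e+e) = e+e := by
  induction k with
  | zero => rfl
  | succ k ih => simp [ih, mul_add, hid]

lemma applyW_replicate (k : ℕ) (x : J) :
    applyW (List.replicate k e) x = Lk e k x := by
  induction k with
  | zero => rfl
  | succ k ih => simp [List.replicate_succ, ih]

lemma rnm_rep_concat (k : ℕ) (w : J) :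
    rnm (List.replicate k e ++ [w]) = Lk e k w := by
  rw [rnm_concat, applyW_replicate]

lemma getD_rep {α : Type*} {i k : ℕ} (h : i < k) (x d : α) :
    (List.replicate k x).getD i d = x := by
  induction k generalizing i with
  | zero => omega
  | succ k ih =>
    cases i with
    | zero => rfl
    | succ i => rw [List.replicate_succ, List.getD_cons_succ]; exact ih (by omega)

variable {n m : ℕ} (hm : n = m + 2)
variable (D : J → J) (hder : IsNDer n D) (hDe : D e = 0)

include hm hder hDe in
lemma H1 (u w : J) :
    D (u * Lk e m w) = D u * Lk e m w + u * Lk e m (D w) := by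
  set L2 : List J := List.replicate m e ++ [w] with hL2
  have hlen : (u :: L2).length = n := by simp [hL2, hm]
  have h := hder _ hlen
  have hval : rnm (u :: L2) = u * Lk e m w := by
    rw [rnm_cons_ne u _ (by simp [hL2]), hL2, rnm_rep_concat]
  rw [hval] at h
  rw [h, hm]
  rw [Finset.sum_range_succ, Finset.sum_range_succ']
  have hmid : ∀ i ∈ Finset.range m,
      rnm ((u :: L2).set (i+1) (D ((u :: L2).getD (i+1) 0))) = 0 := by
    intro i hi
    have hi' : i < m := Finset.mem_range.mp hi
    have hget : (u :: L2).getD (i+1) 0 = e := by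
      rw [List.getD_cons_succ, hL2, List.getD_append _ _ _ _ (by simpa using hi'),
        getD_rep hi']
    rw [hget, hDe, List.set_cons_succ]
    have hset : L2.set i 0 = (List.replicate m e).set i 0 ++ [w] := by
      rw [hL2, List.set_append, if_pos (by simpa using hi')]
    have hset2 : (List.replicate m e).set i 0
        = List.take i (List.replicate m e) ++ 0 :: List.drop (i+1) (List.replicate m e) := by
      rw [List.set_eq_take_append_cons_drop, if_pos (by simpa using hi')]
    rw [hset, hset2, List.append_assoc, List.cons_append]
    exact rnm_mid_zero (u :: List.take i (List.replicate m e))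
      (List.drop (i+1) (List.replicate m e) ++ [w])
  rw [Finset.sum_congr rfl hmid, Finset.sum_const, smul_zero, zero_add]
  have h0 : rnm ((u :: L2).set 0 (D ((u :: L2).getD 0 0))) = D u * Lk e m w := by
    have : (u :: L2).set 0 (D u) = D u :: L2 := rfl
    rw [show (u :: L2).getD 0 0 = u from rfl, this,
      rnm_cons_ne _ _ (by simp [hL2]), hL2, rnm_rep_concat]
  have hlast : rnm ((u :: L2).set (m+1) (D ((u :: L2).getD (m+1) 0))) = u * Lk e m (D w) := by
    have hget : (u :: L2).getD (m+1) 0 = w := by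
      rw [List.getD_cons_succ, hL2, List.getD_append_right _ _ _ _ (by simp)]
      simp
    rw [hget, List.set_cons_succ]
    have hset : L2.set m (D w) = List.replicate m e ++ [D w] := by
      rw [hL2, List.set_append, if_neg (by simp)]
      simp
    rw [hset, rnm_cons_ne _ _ (by simp), rnm_rep_concat]
  rw [h0, hlast]

include hm hder in
lemma HDER (t : List J) (ht : t.length = m + 1) (x : J) :
    D (applyW t x) = (∑ i ∈ Finset.range (m+1), applyW (t.set i (D (t.getD i 0))) x)
      + applyW t (D x) := by
  have hlen : (t ++ [x]).length = n := by simp [ht, hm]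
  have h := hder _ hlen
  rw [rnm_concat] at h
  rw [h, hm, Finset.sum_range_succ]
  have hmid : ∀ i ∈ Finset.range (m+1),
      rnm ((t ++ [x]).set i (D ((t ++ [x]).getD i 0)))
        = applyW (t.set i (D (t.getD i 0))) x := by
    intro i hi
    have hi' : i < m + 1 := Finset.mem_range.mp hi
    have hget : (t ++ [x]).getD i 0 = t.getD i 0 :=
      List.getD_append _ _ _ _ (by omega)
    have hset : (t ++ [x]).set i (D (t.getD i 0)) = t.set i (D (t.getD i 0)) ++ [x] := by
      rw [List.set_append, if_pos (by omega)]
    rw [hget, hset, rnm_concat]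
  rw [Finset.sum_congr rfl hmid]
  congr 1
  have hget : (t ++ [x]).getD (m+1) 0 = x := by
    rw [List.getD_append_right _ _ _ _ (by omega)]
    simp [ht]
  have hset : (t ++ [x]).set (m+1) (D x) = t ++ [D x] := by
    rw [List.set_append, if_neg (by omega)]
    simp [ht]
  rw [hget, hset, rnm_concat]

include hm hder in
lemma hD0 : D (0:J) = 0 := by
  have h := HDER hm D hder (List.replicate (m+1) (0:J)) (by simp) 0
  have h1 : applyW (List.replicate (m+1) (0:J)) (0:J) = 0 := applyW_zero _
  have h2 : applyW (List.replicate (m+1) (0:J)) (D 0) = 0 := by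
    rw [List.replicate_succ]; simp
  rw [h1, h2] at h
  simpa using h

include hm hder in
lemma TPL (t : List J) (ht : t.length = m + 1) (p q r : J) :
    D (applyW t (p+q+r)) - D (applyW t p) - D (applyW t q) - D (applyW t r)
      = applyW t (D (p+q+r) - D p - D q - D r) := by
  rw [HDER hm D hder t ht (p+q+r), HDER hm D hder t ht p,
    HDER hm D hder t ht q, HDER hm D hder t ht r]
  have hSum : (∑ i ∈ Finset.range (m+1), applyW (t.set i (D (t.getD i 0))) (p+q+r))
      = (∑ i ∈ Finset.range (m+1), applyW (t.set i (D (t.getD i 0))) p)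
      + (∑ i ∈ Finset.range (m+1), applyW (t.set i (D (t.getD i 0))) q)
      + (∑ i ∈ Finset.range (m+1), applyW (t.set i (D (t.getD i 0))) r) := by
    rw [← Finset.sum_add_distrib, ← Finset.sum_add_distrib]
    exact Finset.sum_congr rfl (fun i _ => by rw [applyW_add, applyW_add])
  rw [hSum, applyW_sub, applyW_sub, applyW_sub]
  abel

include hm hder in
lemma TPLc (k : ℕ) (t : List J) (ht : t.length = k * (m+1)) (p q r : J) :
    D (applyW t (p+q+r)) - D (applyW t p) - D (applyW t q) - D (applyW t r)
      = applyW t (D (p+q+r) - D p - D q - D r) := by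
  induction k generalizing t with
  | zero =>
    have : t = [] := List.eq_nil_of_length_eq_zero (by simpa using ht)
    subst this; simp
  | succ k ih =>
    have htot : t.length = k * (m+1) + (m+1) := by rw [ht, Nat.succ_mul]
    have hlen1 : (t.take (m+1)).length = m + 1 := by
      rw [List.length_take]; omega
    have hlen2 : (t.drop (m+1)).length = k * (m+1) := by
      rw [List.length_drop]; omega
    have hsplit : t = t.take (m+1) ++ t.drop (m+1) := (List.take_append_drop _ _).symm
    rw [hsplit]
    rw [applyW_append, applyW_append, applyW_append, applyW_append, applyW_append]
    have hPQR : applyW (t.drop (m+1)) (p+q+r)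
        = applyW (t.drop (m+1)) p + applyW (t.drop (m+1)) q + applyW (t.drop (m+1)) r := by
      rw [applyW_add, applyW_add]
    rw [hPQR]
    have := TPL hm D hder (t.take (m+1)) hlen1
      (applyW (t.drop (m+1)) p) (applyW (t.drop (m+1)) q) (applyW (t.drop (m+1)) r)
    rw [this]
    congr 1
    rw [← hPQR]
    exact ih _ hlen2

end Der

section Der2
variable {J : Type*} [NonUnitalNonAssocCommRing J]
variable (e : J)
variable (hJordan : ∀ x y : J, ((x * x) * y) * x = (x * x) * (y * x))
    (h2 : ∀ x : J, x + x = 0 → x = 0)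
    (hid : e * e = e)
    (hcond2 : ∀ a ∈ peirce0 e, (∀ t ∈ peirce0 e, t * a = 0) → a = 0)
variable {n m : ℕ} (hm : n = m + 2)
variable (D : J → J) (hder : IsNDer n D) (hDe : D e = 0)

include hcond2 in
lemma desc (ℓ : ℕ) : ∀ x : J, (∀ l : List J, l.length = ℓ → applyW l x = 0) → x = 0 := by
  induction ℓ with
  | zero =>
    intro x h
    simpa using h [] rfl
  | succ ℓ ih =>
    intro x h
    apply ih
    intro l hl
    have hy : ∀ t : J, t * applyW l x = 0 := by
      intro t
      have := h (t :: l) (by simp [hl])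
      simpa using this
    exact hcond2 _ (hy e) (fun t _ => hy t)

include hcond2 hm hder in
lemma chain_kill (I : List J) (p q r : J)
    (hp : applyW I p = 0) (hq : applyW I q = 0) :
    applyW I (D (p+q+r) - D p - D q - D r) = 0 := by
  apply desc e hcond2 (I.length * m)
  intro W hW
  rw [← applyW_append]
  have hlen : (W ++ I).length = I.length * (m+1) := by
    simp only [List.length_append, hW]; ring
  have h := TPLc hm D hder I.length (W ++ I) hlen p q r
  have hp' : applyW (W ++ I) p = 0 := by rw [applyW_append, hp, applyW_zero]
  have hq' : applyW (W ++ I) q = 0 := by rw [applyW_append, hq, applyW_zero]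
  have hsum : applyW (W ++ I) (p+q+r) = applyW (W ++ I) r := by
    have hI : applyW I (p+q+r) = applyW I r := by
      rw [applyW_add, applyW_add, hp, hq, zero_add, zero_add]
    rw [applyW_append, hI, ← applyW_append]
  rw [hp', hq', hsum, hD0 hm D hder, sub_zero, sub_zero, sub_self] at h
  exact h.symm

include hm hder hDe hid in
lemma F2 (x : J) : D (e * x) = e * D x := by
  have h := H1 e hm D hder hDe x e
  rw [Lk_e e hid, hDe, Lk_zero, mul_zero, add_zero] at h
  rw [mul_comm e x, h, mul_comm (D x) e]

include hm hder hDe hid in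
lemma F2k (k : ℕ) (x : J) : D (Lk e k x) = Lk e k (D x) := by
  induction k with
  | zero => rfl
  | succ k ih => rw [Lk_succ, F2 e hid hm D hder hDe, ih, Lk_succ]

lemma pw_half {b : J} (hb : e*b + e*b = b) (k : ℕ) :
    e * pw k b + e * pw k b = pw k b := by
  induction k with
  | zero => exact hb
  | succ k ih =>
    show e * (pw k b + pw k b) + e * (pw k b + pw k b) = pw k b + pw k b
    rw [mul_add]
    calc e * pw k b + e * pw k b + (e * pw k b + e * pw k b)
        = (e * pw k b + e * pw k b) + (e * pw k b + e * pw k b) := by abel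
      _ = pw k b + pw k b := by rw [ih]

lemma Lk_pw {b : J} (hb : e*b + e*b = b) (k : ℕ) : Lk e k (pw k b) = b := by
  induction k with
  | zero => rfl
  | succ k ih =>
    show e * Lk e k (pw k b + pw k b) = b
    rw [Lk_add, ih, mul_add, hb]

include hm hder hDe hid in
lemma Lk_D_pw {b : J} (hb : e*b + e*b = b) (k : ℕ) : Lk e k (D (pw k b)) = D b := by
  induction k with
  | zero => rfl
  | succ k ih =>
    rw [Lk_succ', ← F2 e hid hm D hder hDe]
    show Lk e k (D (e * (pw k b + pw k b))) = D b
    rw [mul_add, pw_half e hb k]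
    exact ih

end Der2

section T3sec
variable {J : Type*} [NonUnitalNonAssocCommRing J]
variable (e : J)
variable (hJordan : ∀ x y : J, ((x * x) * y) * x = (x * x) * (y * x))
    (h2 : ∀ x : J, x + x = 0 → x = 0)
    (hid : e * e = e)
    (hcond1 : ∀ a ∈ peirce1 e, (∀ t ∈ peirceHalf e, t * a = 0) → a = 0)
    (hcond1' : ∀ a ∈ peirce0 e, (∀ t ∈ peirceHalf e, t * a = 0) → a = 0)
    (hcond2 : ∀ a ∈ peirce0 e, (∀ t ∈ peirce0 e, t * a = 0) → a = 0)
    (hcond3 : ∀ a ∈ peirceHalf e, (∀ t ∈ peirce0 e, t * a = 0) → a = 0)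

lemma Ph {q : J} (hq : e*q + e*q = q) : e*(e*q) + e*(e*q) = e*q := by
  rw [← mul_add, hq]

include hJordan h2 hid in
lemma Pa' {w t : J} (h1 : e*w = w) (ht : e*t = 0) : t*w = 0 := by
  rw [mul_comm]; exact Pa e hJordan h2 hid h1 ht

include hJordan h2 hid in
lemma Pc2 {x s : J} (hx : e*x = 0) (hs : e*s + e*s = s) :
    e*(s*x) + e*(s*x) = s*x := by
  rw [mul_comm s x]; exact Pc e hJordan h2 hid hx hs

include hJordan h2 hid in
lemma Pe2 {u s : J} (hu : e*u = u) (hs : e*s + e*s = s) :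
    e*(s*u) + e*(s*u) = s*u := by
  rw [mul_comm s u]; exact Pe e hJordan h2 hid hu hs

include hJordan h2 hid hcond1' hcond3 in
lemma killJ0 (x : J) (hx : e*x = 0)
    (hann : ∀ s t : J, (e*s + e*s = s) → (e*t = 0) → t*(e*(s*x)) = 0) : x = 0 := by
  apply hcond1' x hx
  intro s hs
  have hs' : e*s + e*s = s := hs
  have hsx : e*(s*x) + e*(s*x) = s*x := Pc2 e hJordan h2 hid hx hs'
  have h1 : e*(s*x) = 0 :=
    hcond3 _ (Ph e hsx) (fun t ht => hann s t hs' ht)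
  rw [← hsx, h1, add_zero]

include hJordan h2 hid hcond1 hcond1' hcond2 hcond3 in
lemma kill (x : J)
    (k0 : ∀ t : J, e*t = 0 → t * x = 0)
    (k1 : ∀ t : J, e*t = 0 → t * (e*x) = 0)
    (k2 : ∀ t : J, e*t = 0 → t * (e*(e*x)) = 0)
    (k3 : ∀ s t : J, (e*s + e*s = s) → e*t = 0 → t * (s * (e*x)) = 0)
    (k4 : ∀ s t : J, (e*s + e*s = s) → e*t = 0 → t * (s * (e*(e*x))) = 0) :
    x = 0 := by
  have PPx := PP e hJordan h2 hid x
  set p : J := e*(e*x) + e*(e*x) + x - (e*x + e*x + e*x) with hp_def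
  have hpe : e * p = 0 := by
    have hexp : e * p = (e*x + e*(e*(e*x)) + e*(e*(e*x))) - (e*(e*x) + e*(e*x) + e*(e*x)) := by
      rw [hp_def, mul_sub, mul_add, mul_add, mul_add, mul_add]
      abel
    rw [hexp, PPx, sub_self]
  have hp : p = 0 := by
    apply hcond2 p hpe
    intro t ht
    have ht' : e * t = 0 := ht
    have : t * p = (t*(e*(e*x)) + t*(e*(e*x)) + t*x) - (t*(e*x) + t*(e*x) + t*(e*x)) := by
      rw [hp_def, mul_sub, mul_add, mul_add, mul_add, mul_add]
    rw [this, k0 t ht', k1 t ht', k2 t ht']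
    simp
  set h : J := e*(e*x) + e*(e*x) - e*x with hh_def
  have hhe : e * h = h := by
    have hexp : e * h = (e*(e*(e*x)) + e*(e*(e*x))) - e*(e*x) := by
      rw [hh_def, mul_sub, mul_add]
    have h2x : e*(e*(e*x)) + e*(e*(e*x)) = (e*(e*x) + e*(e*x) + e*(e*x)) - e*x := by
      rw [← PPx]; abel
    rw [hexp, h2x, hh_def]
    abel
  have hh : h = 0 := by
    apply hcond1 h hhe
    intro s hs
    have hs' : e*s + e*s = s := hs
    have hsh_half : e*(s*h) + e*(s*h) = s*h := Pe2 e hJordan h2 hid hhe hs'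
    apply hcond3 _ hsh_half
    intro t ht
    have ht' : e * t = 0 := ht
    have hexp : t * (s * h) = (t*(s*(e*(e*x))) + t*(s*(e*(e*x)))) - t*(s*(e*x)) := by
      rw [hh_def, mul_sub, mul_add, mul_sub, mul_add]
    rw [hexp, k4 s t hs' ht', k3 s t hs' ht']
    simp
  have hfin : e*x + e*x = x := by
    have hd : x - (e*x + e*x) = p - h := by rw [hp_def, hh_def]; abel
    rw [hp, hh, sub_self] at hd
    have := sub_eq_zero.mp hd
    exact this.symm
  exact hcond3 x hfin (fun t ht => k0 t ht)

end T3sec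

section T3proof
variable {J : Type*} [NonUnitalNonAssocCommRing J]
variable (e : J)
variable (hJordan : ∀ x y : J, ((x * x) * y) * x = (x * x) * (y * x))
    (h2 : ∀ x : J, x + x = 0 → x = 0)
    (hid : e * e = e)
    (hcond1 : ∀ a ∈ peirce1 e, (∀ t ∈ peirceHalf e, t * a = 0) → a = 0)
    (hcond1' : ∀ a ∈ peirce0 e, (∀ t ∈ peirceHalf e, t * a = 0) → a = 0)
    (hcond2 : ∀ a ∈ peirce0 e, (∀ t ∈ peirce0 e, t * a = 0) → a = 0)
    (hcond3 : ∀ a ∈ peirceHalf e, (∀ t ∈ peirce0 e, t * a = 0) → a = 0)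
variable {n m : ℕ} (hm : n = m + 2)
variable (D : J → J) (hder : IsNDer n D) (hDe : D e = 0)

set_option maxHeartbeats 1000000 in
include hJordan h2 hid hcond1 hcond1' hcond2 hcond3 hm hder hDe in
lemma T3 (u v q : J) (hu : e*u = u) (hv : e*v = 0) (hq : e*q + e*q = q) :
    D (u + v + q) = D u + D v + D q := by
  set δ : J := D (u+v+q) - D u - D v - D q with hδ_def
  suffices hδ0 : δ = 0 by
    have h' : D (u+v+q) - (D u + D v + D q) = δ := by rw [hδ_def]; abel
    rw [hδ0] at h'
    exact sub_eq_zero.mp h'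
  -- basic zero products
  have htu : ∀ t : J, e*t = 0 → t*u = 0 := fun t ht => Pa' e hJordan h2 hid hu ht
  -- k0
  have k0 : ∀ t : J, e*t = 0 → t*δ = 0 := by
    intro t ht
    have htq : e*(t*q) + e*(t*q) = t*q := Pc e hJordan h2 hid ht hq
    have hstep1 : e*(t*δ) = 0 := by
      have hc := chain_kill e hcond2 hm D hder [e+e, t] u v q
        (by simp only [applyW_cons, applyW_nil]; rw [htu t ht, mul_zero])
        (by simp only [applyW_cons, applyW_nil]
            rw [add_mul, Pb e hJordan h2 hid ht hv]; simp)
      simp only [applyW_cons, applyW_nil] at hc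
      rw [← hδ_def] at hc
      apply h2
      rw [show e*(t*δ) + e*(t*δ) = (e+e)*(t*δ) by rw [add_mul]]
      exact hc
    apply killJ0 e hJordan h2 hid hcond1' hcond3 (t*δ) hstep1
    intro s t' hs ht'
    have hc := chain_kill e hcond2 hm D hder [t', e, s, t] u q v
      (by simp only [applyW_cons, applyW_nil]
          rw [htu t ht, mul_zero, mul_zero, mul_zero])
      (by simp only [applyW_cons, applyW_nil]
          exact Pa' e hJordan h2 hid (Pg e hJordan h2 hid hs htq) ht')
    simp only [applyW_cons, applyW_nil] at hc
    have hperm : D (u+q+v) - D u - D q - D v = δ := by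
      rw [show u+q+v = u+v+q by abel, hδ_def]; abel
    rw [hperm] at hc
    exact hc
  -- k1 k2
  have k1 : ∀ t : J, e*t = 0 → t*(e*δ) = 0 := by
    intro t ht
    have hc := chain_kill e hcond2 hm D hder [t, e] u v q
      (by simp only [applyW_cons, applyW_nil]; rw [hu, htu t ht])
      (by simp only [applyW_cons, applyW_nil]; rw [hv, mul_zero])
    simp only [applyW_cons, applyW_nil] at hc
    rw [← hδ_def] at hc
    exact hc
  have k2 : ∀ t : J, e*t = 0 → t*(e*(e*δ)) = 0 := by
    intro t ht
    have hc := chain_kill e hcond2 hm D hder [t, e, e] u v q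
      (by simp only [applyW_cons, applyW_nil]; rw [hu, hu, htu t ht])
      (by simp only [applyW_cons, applyW_nil]; rw [hv, mul_zero, mul_zero])
    simp only [applyW_cons, applyW_nil] at hc
    rw [← hδ_def] at hc
    exact hc
  -- k3 k4
  have k34 : ∀ (L : J) (hL : e*L = 0 → True), True := fun _ _ => trivial
  have k3gen : ∀ (w : J), (e*(e*w) = e*w → True) → True := fun _ _ => trivial
  have hk3 : ∀ s t : J, (e*s + e*s = s) → e*t = 0 → t * (s * (e*δ)) = 0 := by
    intro s t hs ht
    have hLq : e*(e*q) + e*(e*q) = e*q := Ph e hq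
    have part1 : e*(t*(s*(e*δ))) = 0 := by
      have hc := chain_kill e hcond2 hm D hder [e+e, t, s, e] v q u
        (by simp only [applyW_cons, applyW_nil]
            rw [hv, mul_zero, mul_zero, mul_zero])
        (by simp only [applyW_cons, applyW_nil]
            rw [add_mul, Pi' e hJordan h2 hid ht hs hLq]; simp)
      simp only [applyW_cons, applyW_nil] at hc
      have hperm : D (v+q+u) - D v - D q - D u = δ := by
        rw [show v+q+u = u+v+q by abel, hδ_def]; abel
      rw [hperm] at hc
      apply h2
      rw [show e*(t*(s*(e*δ))) + e*(t*(s*(e*δ))) = (e+e)*(t*(s*(e*δ))) by rw [add_mul]]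
      exact hc
    apply killJ0 e hJordan h2 hid hcond1' hcond3 _ part1
    intro s' t'' hs' ht''
    have hsu : e*(s*u) + e*(s*u) = s*u := Pe2 e hJordan h2 hid hu hs
    have htsu : e*(t*(s*u)) + e*(t*(s*u)) = t*(s*u) := Pc e hJordan h2 hid ht hsu
    have hc := chain_kill e hcond2 hm D hder [t'', e, s', t, s, e] u v q
      (by simp only [applyW_cons, applyW_nil]
          rw [hu]
          exact Pa' e hJordan h2 hid (Pg e hJordan h2 hid hs' htsu) ht'')
      (by simp only [applyW_cons, applyW_nil]
          rw [hv, mul_zero, mul_zero, mul_zero, mul_zero, mul_zero])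
    simp only [applyW_cons, applyW_nil] at hc
    rw [← hδ_def] at hc
    exact hc
  have hk4 : ∀ s t : J, (e*s + e*s = s) → e*t = 0 → t * (s * (e*(e*δ))) = 0 := by
    intro s t hs ht
    have hLq : e*(e*q) + e*(e*q) = e*q := Ph e hq
    have hLLq : e*(e*(e*q)) + e*(e*(e*q)) = e*(e*q) := Ph e hLq
    have part1 : e*(t*(s*(e*(e*δ)))) = 0 := by
      have hc := chain_kill e hcond2 hm D hder [e+e, t, s, e, e] v q u
        (by simp only [applyW_cons, applyW_nil]
            rw [hv, mul_zero, mul_zero, mul_zero, mul_zero])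
        (by simp only [applyW_cons, applyW_nil]
            rw [add_mul, Pi' e hJordan h2 hid ht hs hLLq]; simp)
      simp only [applyW_cons, applyW_nil] at hc
      have hperm : D (v+q+u) - D v - D q - D u = δ := by
        rw [show v+q+u = u+v+q by abel, hδ_def]; abel
      rw [hperm] at hc
      apply h2
      rw [show e*(t*(s*(e*(e*δ)))) + e*(t*(s*(e*(e*δ))))
          = (e+e)*(t*(s*(e*(e*δ)))) by rw [add_mul]]
      exact hc
    apply killJ0 e hJordan h2 hid hcond1' hcond3 _ part1
    intro s' t'' hs' ht''
    have hsu : e*(s*u) + e*(s*u) = s*u := Pe2 e hJordan h2 hid hu hs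
    have htsu : e*(t*(s*u)) + e*(t*(s*u)) = t*(s*u) := Pc e hJordan h2 hid ht hsu
    have hc := chain_kill e hcond2 hm D hder [t'', e, s', t, s, e, e] u v q
      (by simp only [applyW_cons, applyW_nil]
          rw [hu, hu]
          exact Pa' e hJordan h2 hid (Pg e hJordan h2 hid hs' htsu) ht'')
      (by simp only [applyW_cons, applyW_nil]
          rw [hv, mul_zero, mul_zero, mul_zero, mul_zero, mul_zero, mul_zero])
    simp only [applyW_cons, applyW_nil] at hc
    rw [← hδ_def] at hc
    exact hc
  exact kill e hJordan h2 hid hcond1 hcond1' hcond2 hcond3 δ k0 k1 k2 hk3 hk4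

end T3proof

section Assembly
variable {J : Type*} [NonUnitalNonAssocCommRing J]
variable (e : J)
variable (hid : e * e = e)

lemma half_add {x y : J} (hx : e*x + e*x = x) (hy : e*y + e*y = y) :
    e*(x+y) + e*(x+y) = x + y := by
  rw [mul_add]
  calc e*x + e*y + (e*x + e*y) = (e*x + e*x) + (e*y + e*y) := by abel
    _ = x + y := by rw [hx, hy]

include hid in
lemma applyW_repE2 (k : ℕ) {x : J} (hx : e*x + e*x = x) :
    applyW (List.replicate k (e+e)) x = x := by
  induction k with
  | zero => rfl
  | succ k ih => rw [List.replicate_succ, applyW_cons, ih, add_mul, hx]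

end Assembly

theorem nDer_additive_on_half' {n : ℕ} (hn : 2 ≤ n) {J : Type*} [NonUnitalNonAssocCommRing J]
    (hJordan : ∀ x y : J, ((x * x) * y) * x = (x * x) * (y * x))
    (h2 : ∀ x : J, x + x = 0 → x = 0)
    (e : J) (hid : e * e = e)
    (hcond1 : ∀ a ∈ peirce1 e, (∀ t ∈ peirceHalf e, t * a = 0) → a = 0)
    (hcond1' : ∀ a ∈ peirce0 e, (∀ t ∈ peirceHalf e, t * a = 0) → a = 0)
    (hcond2 : ∀ a ∈ peirce0 e, (∀ t ∈ peirce0 e, t * a = 0) → a = 0)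
    (hcond3 : ∀ a ∈ peirceHalf e, (∀ t ∈ peirce0 e, t * a = 0) → a = 0)
    (D : J → J) (hder : IsNDer n D) (hDe : D e = 0) :
    ∀ a ∈ peirceHalf e, ∀ b ∈ peirceHalf e, D (a + b) = D a + D b := by
  obtain ⟨m, hm⟩ : ∃ m, n = m + 2 := ⟨n - 2, by omega⟩
  intro a ha b hb
  have ha' : e*a + e*a = a := ha
  have hb' : e*b + e*b = b := hb
  have hz' : e*(a+b) + e*(a+b) = a + b := half_add e ha' hb'
  set c : J := D (a+b) - D a - D b with hc_def
  suffices hc0 : c = 0 by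
    have h' : D (a+b) - (D a + D b) = c := by rw [hc_def]; abel
    rw [hc0] at h'
    exact sub_eq_zero.mp h'
  have hD0 : D (0:J) = 0 := hD0 hm D hder
  -- Step 1 : c is in the half component
  have hchalf : e*c + e*c = c := by
    set w : J := applyW (List.replicate m (e+e)) c with hw_def
    have eq1 : c = e*w + e*w := by
      have h := TPL hm D hder (List.replicate (m+1) (e+e)) (by simp) a b 0
      simp only [add_zero, applyW_zero, hD0, sub_zero] at h
      rw [applyW_repE2 e hid _ hz',
        applyW_repE2 e hid _ ha', applyW_repE2 e hid _ hb', ← hc_def] at h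
      rw [List.replicate_succ, applyW_cons, ← hw_def, add_mul] at h
      exact h
    have eq2 : e*c = e*w := by
      have h := TPL hm D hder (e :: List.replicate m (e+e)) (by simp) a b 0
      simp only [add_zero, applyW_zero, hD0, sub_zero] at h
      rw [applyW_cons, applyW_cons, applyW_cons,
        applyW_repE2 e hid _ hz', applyW_repE2 e hid _ ha', applyW_repE2 e hid _ hb'] at h
      rw [F2 e hid hm D hder hDe, F2 e hid hm D hder hDe, F2 e hid hm D hder hDe] at h
      rw [applyW_cons, ← hc_def, ← hw_def] at h
      calc e*c = e * D (a+b) - e * D a - e * D b := by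
            rw [hc_def, mul_sub, mul_sub]
        _ = e * w := h
    rw [← eq2] at eq1
    exact eq1.symm
  -- notation
  obtain ⟨f, hf_def⟩ : ∃ f : J, f = e + e := ⟨_, rfl⟩
  have hf1 : e * f = f := by rw [hf_def, mul_add, hid]
  obtain ⟨g, hg_def⟩ : ∃ g : J, g = f + f := ⟨_, rfl⟩
  have hg1 : e * g = g := by rw [hg_def, mul_add, hf1]
  obtain ⟨pb, hpb_def⟩ : ∃ p : J, p = pw m b := ⟨_, rfl⟩
  have hpbhalf : e*pb + e*pb = pb := by rw [hpb_def]; exact pw_half e hb' m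
  have hLkpb : Lk e m pb = b := by rw [hpb_def]; exact Lk_pw e hb' m
  have hLkDpb : Lk e m (D pb) = D b := by rw [hpb_def]; exact Lk_D_pw e hid hm D hder hDe hb' m
  have hLkf : Lk e m f = f := by rw [hf_def]; exact Lk_E2 e hid m
  have hLkfpb : Lk e m (f + pb) = f + b := by rw [Lk_add, hLkf, hLkpb]
  -- T3 instances
  have hT3 := T3 e hJordan h2 hid hcond1 hcond1' hcond2 hcond3 hm D hder hDe
  have hDfa : D (f + a) = D f + D a := by
    have h := hT3 f 0 a hf1 (mul_zero e) ha'
    rw [add_zero, hD0, add_zero] at h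
    exact h
  have hDfpb : D (f + pb) = D f + D pb := by
    have h := hT3 f 0 pb hf1 (mul_zero e) hpbhalf
    rw [add_zero, hD0, add_zero] at h
    exact h
  -- H1 instances
  have I11 : D ((f+a)*(f+b)) = (D f + D a)*(f+b) + (f+a)*(Lk e m (D f) + D b) := by
    have h := H1 e hm D hder hDe (f+a) (f+pb)
    rw [hLkfpb, hDfpb, Lk_add, hLkDpb, hDfa] at h
    exact h
  have I10 : D ((f+a)*f) = (D f + D a)*f + (f+a)*(Lk e m (D f)) := by
    have h := H1 e hm D hder hDe (f+a) f
    rw [hLkf, hDfa] at h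
    exact h
  have I01 : D (f*(f+b)) = D f*(f+b) + f*(Lk e m (D f) + D b) := by
    have h := H1 e hm D hder hDe f (f+pb)
    rw [hLkfpb, hDfpb, Lk_add, hLkDpb] at h
    exact h
  have I00 : D (f*f) = D f*f + f*(Lk e m (D f)) := by
    have h := H1 e hm D hder hDe f f
    rw [hLkf] at h
    exact h
  have F3ab : D (a*b) = D a * b + a * D b := by
    have h := H1 e hm D hder hDe a pb
    rw [hLkpb, hLkDpb] at h
    exact h
  -- product values
  have hfb : f * b = b := by rw [hf_def, add_mul, hb']
  have hfa : f * a = a := by rw [hf_def, add_mul, ha']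
  have hff : f * f = g := by
    rw [hg_def]
    calc f * f = e*f + e*f := by rw [hf_def, add_mul]
      _ = f + f := by rw [hf1]
  have hv11 : (f+a)*(f+b) = g + (a+b) + a*b := by
    rw [mul_add, add_mul, add_mul, hff, mul_comm a f, hfa, hfb]
    abel
  have hv10 : (f+a)*f = g + a := by
    rw [add_mul, hff, mul_comm a f, hfa]
  have hv01 : f*(f+b) = g + b := by
    rw [mul_add, hff, hfb]
  -- combo
  have hcombo : D (g + (a+b) + a*b) - D (g+a) - D (g+b) + D g = D (a*b) := by
    rw [← hv11, ← hv10, ← hv01, ← hff, I11, I10, I01, I00, F3ab]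
    simp only [add_mul, mul_add]
    abel
  -- splits
  obtain ⟨m1, hm1_def⟩ : ∃ y : J, y = e*(a*b) := ⟨_, rfl⟩
  have hm1 : e * m1 = m1 := by
    rw [hm1_def]; exact Pg e hJordan h2 hid ha' hb'
  obtain ⟨m0, hm0_def⟩ : ∃ y : J, y = a*b - m1 := ⟨_, rfl⟩
  have hm0 : e * m0 = 0 := by
    rw [hm0_def, mul_sub, hm1, hm1_def, sub_self]
  have hgm1 : e*(g + m1) = g + m1 := by rw [mul_add, hg1, hm1]
  have split1 : D (g + (a+b) + a*b) = D (g+m1) + D m0 + D (a+b) := by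
    have h := hT3 (g+m1) m0 (a+b) hgm1 hm0 hz'
    rw [show g + m1 + m0 + (a+b) = g + (a+b) + a*b by rw [hm0_def]; abel] at h
    exact h
  have split2 : D (g+a) = D g + D a := by
    have h := hT3 g 0 a hg1 (mul_zero e) ha'
    rw [add_zero, hD0, add_zero] at h
    exact h
  have split3 : D (g+b) = D g + D b := by
    have h := hT3 g 0 b hg1 (mul_zero e) hb'
    rw [add_zero, hD0, add_zero] at h
    exact h
  have split4 : D (a*b) = D m1 + D m0 := by
    have h := hT3 m1 m0 0 hm1 hm0 (by simp)
    rw [show m1 + m0 + 0 = a*b by rw [hm0_def]; abel, hD0, add_zero] at h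
    exact h
  rw [split1, split2, split3, split4] at hcombo
  obtain ⟨Λ, hΛ_def⟩ : ∃ y : J, y = D (g+m1) - D g - D m1 := ⟨_, rfl⟩
  have hΛc : Λ + c = 0 := by
    rw [hΛ_def, hc_def]
    calc (D (g+m1) - D g - D m1) + (D (a+b) - D a - D b)
        = (D (g+m1) + D m0 + D (a+b) - (D g + D a) - (D g + D b) + D g)
          - (D m1 + D m0) := by abel
      _ = 0 := by rw [hcombo]; exact sub_self _
  -- Λ is killed by hcond3
  have hΛhalf : e*Λ + e*Λ = Λ := by
    have hΛeq : Λ = -c := by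
      have := hΛc
      have h' : Λ = -c + (Λ + c) := by abel
      rw [this, add_zero] at h'
      exact h'
    rw [hΛeq, mul_neg]
    calc -(e*c) + -(e*c) = -(e*c + e*c) := by abel
      _ = -c := by rw [hchalf]
  have hΛann : ∀ t ∈ peirce0 e, t * Λ = 0 := by
    intro t ht
    have ht' : e * t = 0 := ht
    have hc := chain_kill e hcond2 hm D hder [t] g m1 0
      (by simp only [applyW_cons, applyW_nil]
          exact Pa' e hJordan h2 hid hg1 ht')
      (by simp only [applyW_cons, applyW_nil]
          exact Pa' e hJordan h2 hid hm1 ht')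
    simp only [applyW_cons, applyW_nil] at hc
    rw [add_zero, hD0, sub_zero, ← hΛ_def] at hc
    exact hc
  have hΛ0 : Λ = 0 := hcond3 Λ hΛhalf hΛann
  rw [hΛ0, zero_add] at hΛc
  exact hΛc

end NDer

theorem nDer_additive_on_half {n : ℕ} (hn : 2 ≤ n) {J : Type*} [NonUnitalNonAssocCommRing J]
    (hJordan : ∀ x y : J, ((x * x) * y) * x = (x * x) * (y * x))
    (h2 : ∀ x : J, x + x = 0 → x = 0)
    (hn1 : ∀ x : J, (n - 1) • x = 0 → x = 0)
    (e : J) (hid : e * e = e) (hne : e ≠ 0) (hnu : ∃ x : J, e * x ≠ x)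
    (hcond1 : ∀ a ∈ peirce1 e, (∀ t ∈ peirceHalf e, t * a = 0) → a = 0)
    (hcond1' : ∀ a ∈ peirce0 e, (∀ t ∈ peirceHalf e, t * a = 0) → a = 0)
    (hcond2 : ∀ a ∈ peirce0 e, (∀ t ∈ peirce0 e, t * a = 0) → a = 0)
    (hcond3 : ∀ a ∈ peirceHalf e, (∀ t ∈ peirce0 e, t * a = 0) → a = 0)
    (D : J → J) (hder : IsNDer n D) (hDe : D e = 0) :
    ∀ a ∈ peirceHalf e, ∀ b ∈ peirceHalf e, D (a + b) = D a + D b := by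
  exact NDer.nDer_additive_on_half' hn hJordan h2 e hid hcond1 hcond1' hcond2 hcond3 D hder hDe
end

section
/- Let J be a 2-torsion free and (n−1)-torsion free Jordan ring with nontrivial idempotent e satisfying conditions (i)–(iii), and D : J → J an n-multiplicative derivation with D(e) = 0. Then D is additive on J₁ and on J₀: D(a + b) = D(a) + D(b) for all a, b ∈ J_i, i ∈ {1, 0}. -/
set_option linter.unusedSectionVars false

section ListLemmas
variable {J : Type*} [NonUnitalNonAssocCommRing J]

/-- left-nested product chain: `chain [w1,...,wk] x = w1*(w2*(...*(wk*x)))`. -/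
def chain (l : List J) (x : J) : J := l.foldr (· * ·) x

@[simp] lemma chain_nil (x : J) : chain ([] : List J) x = x := rfl
@[simp] lemma chain_cons (w : J) (l : List J) (x : J) : chain (w :: l) x = w * chain l x := rfl

lemma chain_append_singleton (l : List J) (w x : J) :
    chain (l ++ [w]) x = chain l (w * x) := by
  induction l with
  | nil => rfl
  | cons a t ih => simp [chain_cons, ih]

lemma chain_add (l : List J) (x y : J) : chain l (x + y) = chain l x + chain l y := by
  induction l with
  | nil => rfl
  | cons a t ih => simp [chain_cons, ih, mul_add]

lemma chain_sub (l : List J) (x y : J) : chain l (x - y) = chain l x - chain l y := by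
  induction l with
  | nil => rfl
  | cons a t ih => simp [chain_cons, ih, mul_sub]

@[simp] lemma chain_zero (l : List J) : chain l (0 : J) = 0 := by
  induction l with
  | nil => rfl
  | cons a t ih => simp [chain_cons, ih]

lemma chain_set_zero : ∀ (l : List J) (i : ℕ), i < l.length → ∀ x : J, chain (l.set i 0) x = 0
  | [], i, h => by simp at h
  | (w :: t), 0, h => by intro x; simp
  | (w :: t), (i+1), h => by
      intro x
      simp only [List.set_cons_succ, chain_cons]
      rw [chain_set_zero t i (by simpa using h) x, mul_zero]

lemma rnm_cons {l : List J} (h : l ≠ []) (a : J) : rnm (a :: l) = a * rnm l := by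
  cases l with
  | nil => exact absurd rfl h
  | cons b t => rfl

lemma rnm_append_singleton (l : List J) (x : J) : rnm (l ++ [x]) = chain l x := by
  induction l with
  | nil => rfl
  | cons a t ih =>
      rw [List.cons_append, rnm_cons (by simp), ih, chain_cons]

lemma set_append_lt : ∀ (l : List J) (i : ℕ), i < l.length → ∀ x y : J,
    (l ++ [x]).set i y = l.set i y ++ [x]
  | [], i, h => by simp at h
  | (a :: t), 0, h => by intro x y; rfl
  | (a :: t), (i+1), h => by
      intro x y
      simp only [List.cons_append, List.set_cons_succ]
      rw [set_append_lt t i (by simpa using h)]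

lemma set_append_eq : ∀ (l : List J) (x y : J), (l ++ [x]).set l.length y = l ++ [y]
  | [], x, y => rfl
  | (a :: t), x, y => by
      simp only [List.cons_append, List.length_cons, List.set_cons_succ]
      rw [set_append_eq t]

lemma getD_append_lt : ∀ (l : List J) (i : ℕ), i < l.length → ∀ x d : J,
    (l ++ [x]).getD i d = l.getD i d
  | [], i, h => by simp at h
  | (a :: t), 0, h => by intro x d; rfl
  | (a :: t), (i+1), h => by
      intro x d
      simp only [List.cons_append, List.getD_cons_succ]
      exact getD_append_lt t i (by simpa using h) x d

lemma getD_append_eq : ∀ (l : List J) (x d : J), (l ++ [x]).getD l.length d = x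
  | [], x, d => rfl
  | (a :: t), x, d => by
      simp only [List.cons_append, List.length_cons, List.getD_cons_succ]
      exact getD_append_eq t x d

lemma chain_replicate_e (e : J) : ∀ (k : ℕ) (x : J),
    chain (List.replicate k e) x = (fun y => e * y)^[k] x
  | 0, x => rfl
  | (k+1), x => by
      simp only [List.replicate_succ, chain_cons, Function.iterate_succ_apply']
      rw [chain_replicate_e e k x]
end ListLemmas

section CtxDef
variable (J : Type*) [NonUnitalNonAssocCommRing J]

structure Ctx where
  n : ℕ
  hn : 2 ≤ n
  e : J
  hid : e * e = e
  hJ : ∀ x y : J, ((x * x) * y) * x = (x * x) * (y * x)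
  h2 : ∀ x : J, x + x = 0 → x = 0
  hc1 : ∀ a : J, e * a = a → (∀ t : J, e * t + e * t = t → t * a = 0) → a = 0
  hc1' : ∀ a : J, e * a = 0 → (∀ t : J, e * t + e * t = t → t * a = 0) → a = 0
  hc2 : ∀ a : J, e * a = 0 → (∀ t : J, e * t = 0 → t * a = 0) → a = 0
  hc3 : ∀ a : J, e * a + e * a = a → (∀ t : J, e * t = 0 → t * a = 0) → a = 0
  D : J → J
  hder : IsNDer n D
  hDe : D e = 0
end CtxDef

namespace Ctx
variable {J : Type*} [NonUnitalNonAssocCommRing J] (C : Ctx J)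
include C

def R (x : J) : J := C.e * x
def M1 (x : J) : Prop := C.R x = x
def Mh (x : J) : Prop := C.R x + C.R x = x
def M0 (x : J) : Prop := C.R x = 0
/-- Peirce projections -/
def p1 (x : J) : J := (C.R (C.R x) + C.R (C.R x)) - C.R x
def ph (x : J) : J := (C.R x + C.R x + C.R x + C.R x) -
    (C.R (C.R x) + C.R (C.R x) + C.R (C.R x) + C.R (C.R x))
def p0 (x : J) : J := x + (C.R (C.R x) + C.R (C.R x)) - (C.R x + C.R x + C.R x)
/-- additivity defect -/
def dd (x y : J) : J := C.D (x + y) - C.D x - C.D y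

lemma half {a b : J} (h : a + a = b + b) : a = b := by
  have h' : (a - b) + (a - b) = (a + a) - (b + b) := by abel
  rw [h, sub_self] at h'
  exact sub_eq_zero.mp (C.h2 _ h')

lemma R_add (x y : J) : C.R (x + y) = C.R x + C.R y := mul_add _ _ _
lemma R_sub (x y : J) : C.R (x - y) = C.R x - C.R y := mul_sub _ _ _
@[simp] lemma R_zero : C.R (0 : J) = 0 := mul_zero _
@[simp] lemma M1_e : C.M1 C.e := C.hid
@[simp] lemma M1_zero : C.M1 (0 : J) := C.R_zero
@[simp] lemma Mh_zero : C.Mh (0 : J) := by simp [Mh]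
@[simp] lemma M0_zero : C.M0 (0 : J) := C.R_zero
lemma M1_add {x y : J} (hx : C.M1 x) (hy : C.M1 y) : C.M1 (x + y) := by
  unfold M1 at *; rw [R_add, hx, hy]
lemma M1_sub {x y : J} (hx : C.M1 x) (hy : C.M1 y) : C.M1 (x - y) := by
  unfold M1 at *; rw [R_sub, hx, hy]
lemma M1_neg {x : J} (hx : C.M1 x) : C.M1 (-x) := by
  have := C.M1_sub C.M1_zero hx; simpa using this
lemma Mh_add {x y : J} (hx : C.Mh x) (hy : C.Mh y) : C.Mh (x + y) := by
  unfold Mh at *; rw [R_add]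
  calc C.R x + C.R y + (C.R x + C.R y) = (C.R x + C.R x) + (C.R y + C.R y) := by abel
  _ = x + y := by rw [hx, hy]
lemma Mh_sub {x y : J} (hx : C.Mh x) (hy : C.Mh y) : C.Mh (x - y) := by
  unfold Mh at *; rw [R_sub]
  calc C.R x - C.R y + (C.R x - C.R y) = (C.R x + C.R x) - (C.R y + C.R y) := by abel
  _ = x - y := by rw [hx, hy]
lemma Mh_neg {x : J} (hx : C.Mh x) : C.Mh (-x) := by
  have := C.Mh_sub C.Mh_zero hx; simpa using this
lemma M0_add {x y : J} (hx : C.M0 x) (hy : C.M0 y) : C.M0 (x + y) := by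
  unfold M0 at *; rw [R_add, hx, hy, add_zero]
lemma M0_sub {x y : J} (hx : C.M0 x) (hy : C.M0 y) : C.M0 (x - y) := by
  unfold M0 at *; rw [R_sub, hx, hy, sub_zero]
lemma Mh_R {x : J} (hx : C.Mh x) : C.Mh (C.R x) := by
  unfold Mh at *
  have := congrArg C.R hx
  rwa [R_add] at this

end Ctx
namespace Ctx
variable {J : Type*} [NonUnitalNonAssocCommRing J] (C : Ctx J)
include C

lemma ljiA' (z y : J) :
    ((C.e*z)*y)*C.e + ((C.e*z)*y)*C.e + (C.e*y)*z
      = (C.e*z)*(y*C.e) + (C.e*z)*(y*C.e) + C.e*(y*z) := by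
  have hp := C.hJ (C.e + z) y
  have hm := C.hJ (C.e - z) y
  have hz := C.hJ z y
  apply C.half
  have key : (((C.e+z)*(C.e+z))*y)*(C.e+z) - (((C.e-z)*(C.e-z))*y)*(C.e-z)
      = ((C.e+z)*(C.e+z))*(y*(C.e+z)) - ((C.e-z)*(C.e-z))*(y*(C.e-z)) := by
    rw [hp, hm]
  have lhs_eq : (((C.e+z)*(C.e+z))*y)*(C.e+z) - (((C.e-z)*(C.e-z))*y)*(C.e-z)
      = ((((C.e*z)*y)*C.e + ((C.e*z)*y)*C.e + (C.e*y)*z)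
        + (((C.e*z)*y)*C.e + ((C.e*z)*y)*C.e + (C.e*y)*z))
        + (((z*z)*y)*z + ((z*z)*y)*z) := by
    simp only [add_mul, mul_add, sub_mul, mul_sub, C.hid, mul_comm z C.e]
    abel
  have rhs_eq : ((C.e+z)*(C.e+z))*(y*(C.e+z)) - ((C.e-z)*(C.e-z))*(y*(C.e-z))
      = (((C.e*z)*(y*C.e) + (C.e*z)*(y*C.e) + C.e*(y*z))
        + ((C.e*z)*(y*C.e) + (C.e*z)*(y*C.e) + C.e*(y*z)))
        + ((z*z)*(y*z) + (z*z)*(y*z)) := by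
    simp only [add_mul, mul_add, sub_mul, mul_sub, C.hid, mul_comm z C.e]
    abel
  have key2 := lhs_eq.symm.trans (key.trans rhs_eq)
  rw [hz] at key2
  exact add_right_cancel key2

/-- quadratic part of linearization, at y = e :
`((e*z)*e)*z + ((e*z)*e)*z + ((z*z)*e)*e = (e*z)*(e*z) + (e*z)*(e*z) + (z*z)*e` -/
lemma p2e (z : J) :
    ((C.e*z)*C.e)*z + ((C.e*z)*C.e)*z + ((z*z)*C.e)*C.e
      = (C.e*z)*(C.e*z) + (C.e*z)*(C.e*z) + (z*z)*C.e := by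
  have hp := C.hJ (C.e + z) C.e
  have hm := C.hJ (C.e - z) C.e
  apply C.half
  have key : (((C.e+z)*(C.e+z))*C.e)*(C.e+z) + (((C.e-z)*(C.e-z))*C.e)*(C.e-z)
      = ((C.e+z)*(C.e+z))*(C.e*(C.e+z)) + ((C.e-z)*(C.e-z))*(C.e*(C.e-z)) := by
    rw [hp, hm]
  have lhs_eq : (((C.e+z)*(C.e+z))*C.e)*(C.e+z) + (((C.e-z)*(C.e-z))*C.e)*(C.e-z)
      = ((((C.e*z)*C.e)*z + ((C.e*z)*C.e)*z + ((z*z)*C.e)*C.e)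
        + (((C.e*z)*C.e)*z + ((C.e*z)*C.e)*z + ((z*z)*C.e)*C.e))
        + (C.e + C.e) := by
    simp only [add_mul, mul_add, sub_mul, mul_sub, C.hid, mul_comm z C.e]
    abel
  have rhs_eq : ((C.e+z)*(C.e+z))*(C.e*(C.e+z)) + ((C.e-z)*(C.e-z))*(C.e*(C.e-z))
      = (((C.e*z)*(C.e*z) + (C.e*z)*(C.e*z) + (z*z)*C.e)
        + ((C.e*z)*(C.e*z) + (C.e*z)*(C.e*z) + (z*z)*C.e))
        + (C.e + C.e) := by
    simp only [add_mul, mul_add, sub_mul, mul_sub, C.hid, mul_comm z C.e]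
    abel
  have key2 := lhs_eq.symm.trans (key.trans rhs_eq)
  exact add_right_cancel key2

lemma cube' (x : J) :
    C.R (C.R (C.R x)) + C.R (C.R (C.R x)) + C.R x
      = C.R (C.R x) + C.R (C.R x) + C.R (C.R x) := by
  have h := C.ljiA' x C.e
  rw [C.hid] at h
  rw [mul_comm (C.e * x) C.e] at h
  rw [mul_comm (C.e * (C.e * x)) C.e] at h
  exact h

lemma opA' {u : J} (hu : C.e * u = u) (y : J) : C.e * (u * y) = u * (C.e * y) := by
  have h := C.ljiA' u y
  rw [hu] at h
  rw [mul_comm (u*y) C.e] at h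
  rw [mul_comm y C.e] at h
  rw [mul_comm y u] at h
  rw [mul_comm (C.e*y) u] at h
  -- h : e*(u*y) + e*(u*y) + u*(e*y) = u*(e*y) + u*(e*y) + e*(u*y)
  have h' : C.e*(u*y) + (C.e*(u*y) + u*(C.e*y))
      = u*(C.e*y) + (C.e*(u*y) + u*(C.e*y)) := by
    calc C.e*(u*y) + (C.e*(u*y) + u*(C.e*y))
        = C.e*(u*y) + C.e*(u*y) + u*(C.e*y) := by abel
      _ = u*(C.e*y) + u*(C.e*y) + C.e*(u*y) := h
      _ = u*(C.e*y) + (C.e*(u*y) + u*(C.e*y)) := by abel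
  exact add_right_cancel h'

lemma opB' {v : J} (hv : C.e * v = 0) (y : J) : C.e * (v * y) = (C.e * y) * v := by
  have h := C.ljiA' v y
  rw [hv, zero_mul, zero_mul, zero_mul] at h
  rw [mul_comm y v] at h
  -- h : 0 + 0 + (e*y)*v = 0 + 0 + e*(v*y)
  simpa using h.symm

end Ctx
namespace Ctx
variable {J : Type*} [NonUnitalNonAssocCommRing J] (C : Ctx J)
include C

lemma cube_sub (x : J) :
    C.R (C.R (C.R x)) + C.R (C.R (C.R x))
      = C.R (C.R x) + C.R (C.R x) + C.R (C.R x) - C.R x :=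
  eq_sub_of_add_eq (C.cube' x)

lemma mem_p1 (x : J) : C.M1 (C.p1 x) := by
  show C.R _ = _
  unfold p1
  rw [C.R_sub, C.R_add, C.cube_sub]
  abel

lemma mem_ph (x : J) : C.Mh (C.ph x) := by
  show C.R _ + C.R _ = _
  unfold ph
  have h0 := sub_eq_zero_of_eq (C.cube' x)
  rw [C.R_sub, C.R_add, C.R_add, C.R_add, C.R_add, C.R_add, C.R_add]
  set a := C.R x with ha
  set b := C.R (C.R x) with hb
  set c := C.R (C.R (C.R x)) with hc
  have h4 : (c + c + a - (b + b + b)) + (c + c + a - (b + b + b))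
      + (c + c + a - (b + b + b)) + (c + c + a - (b + b + b)) = 0 := by
    rw [h0]; simp
  calc (b + b + b + b - (c + c + c + c)) + (b + b + b + b - (c + c + c + c))
      = (a + a + a + a) - (b + b + b + b)
        - ((c + c + a - (b + b + b)) + (c + c + a - (b + b + b))
           + (c + c + a - (b + b + b)) + (c + c + a - (b + b + b))) := by abel
    _ = (a + a + a + a) - (b + b + b + b) := by rw [h4, sub_zero]

lemma mem_p0 (x : J) : C.M0 (C.p0 x) := by
  show C.R _ = 0
  unfold p0
  have h0 := sub_eq_zero_of_eq (C.cube' x)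
  rw [C.R_sub, C.R_add, C.R_add, C.R_add, C.R_add]
  set a := C.R x
  set b := C.R (C.R x)
  set c := C.R (C.R (C.R x))
  calc a + (c + c) - (b + b + b) = (c + c + a) - (b + b + b) := by abel
    _ = 0 := h0

lemma p_sum (x : J) : C.p1 x + C.ph x + C.p0 x = x := by
  unfold p1 ph p0; abel

lemma direct3 {a b c : J} (ha : C.M1 a) (hb : C.Mh b) (hc : C.M0 c)
    (h : a + b + c = 0) : a = 0 ∧ b = 0 ∧ c = 0 := by
  have ha' : C.R a = a := ha
  have hb' : C.R b + C.R b = b := hb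
  have hc' : C.R c = 0 := hc
  have h1 : a + C.R b = 0 := by
    have := congrArg C.R h
    rw [C.R_add, C.R_add, ha', hc', add_zero, C.R_zero] at this
    exact this
  have h2 : a + C.R (C.R b) = 0 := by
    have := congrArg C.R h1
    rw [C.R_add, ha', C.R_zero] at this
    exact this
  have hbb : C.R b = C.R (C.R b) := add_left_cancel (h1.trans h2.symm)
  have hRb : C.R b = 0 := by
    have hb2 := congrArg C.R hb'
    rw [C.R_add, ← hbb] at hb2
    have : C.R b + C.R b - C.R b = C.R b - C.R b := by rw [hb2]
    simpa using this
  have hb0 : b = 0 := by rw [← hb', hRb, add_zero]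
  have ha0 : a = 0 := by rw [hRb, add_zero] at h1; exact h1
  refine ⟨ha0, hb0, ?_⟩
  rw [ha0, hb0] at h; simpa using h

lemma eqComp {a1 ah a0 b1 bh b0 : J} (h1 : C.M1 a1) (hh : C.Mh ah) (h0 : C.M0 a0)
    (k1 : C.M1 b1) (kh : C.Mh bh) (k0 : C.M0 b0)
    (h : a1 + ah + a0 = b1 + bh + b0) :
    a1 = b1 ∧ ah = bh ∧ a0 = b0 := by
  have hz : (a1 - b1) + (ah - bh) + (a0 - b0) = 0 := by
    calc (a1 - b1) + (ah - bh) + (a0 - b0)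
        = (a1 + ah + a0) - (b1 + bh + b0) := by abel
      _ = 0 := sub_eq_zero_of_eq h
  have hd := C.direct3 (C.M1_sub h1 k1) (C.Mh_sub hh kh) (C.M0_sub h0 k0) hz
  exact ⟨sub_eq_zero.mp hd.1, sub_eq_zero.mp hd.2.1, sub_eq_zero.mp hd.2.2⟩

lemma uniq1 {x : J} (hx : C.M1 x) : C.p1 x = x ∧ C.ph x = 0 ∧ C.p0 x = 0 := by
  have hx' : C.R x = x := hx
  have h2 : C.R (C.R x) = x := by rw [hx', hx']
  unfold p1 ph p0
  rw [h2, hx']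
  exact ⟨by abel, by abel, by abel⟩

lemma uniqh {x : J} (hx : C.Mh x) : C.p1 x = 0 ∧ C.ph x = x ∧ C.p0 x = 0 := by
  have hx' : C.R x + C.R x = x := hx
  have h2 : C.R (C.R x) + C.R (C.R x) = C.R x := by
    have := congrArg C.R hx'; rwa [C.R_add] at this
  unfold p1 ph p0
  refine ⟨by rw [h2]; exact sub_self _, ?_, ?_⟩
  · calc C.R x + C.R x + C.R x + C.R x
          - (C.R (C.R x) + C.R (C.R x) + C.R (C.R x) + C.R (C.R x))
        = C.R x + C.R x + C.R x + C.R x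
          - ((C.R (C.R x) + C.R (C.R x)) + (C.R (C.R x) + C.R (C.R x))) := by abel
      _ = C.R x + C.R x + C.R x + C.R x - (C.R x + C.R x) := by rw [h2]
      _ = C.R x + C.R x := by abel
      _ = x := hx'
  · calc x + (C.R (C.R x) + C.R (C.R x)) - (C.R x + C.R x + C.R x)
        = x + C.R x - (C.R x + C.R x + C.R x) := by rw [h2]
      _ = x - (C.R x + C.R x) := by abel
      _ = x - x := by rw [hx']
      _ = 0 := sub_self _

lemma uniq0 {x : J} (hx : C.M0 x) : C.p1 x = 0 ∧ C.ph x = 0 ∧ C.p0 x = x := by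
  have hx' : C.R x = 0 := hx
  unfold p1 ph p0
  rw [hx', C.R_zero]
  exact ⟨by abel, by abel, by abel⟩

lemma mul11 {u u' : J} (hu : C.M1 u) (hu' : C.M1 u') : C.M1 (u * u') := by
  have hu'' : C.e * u' = u' := hu'
  show C.e * _ = _
  rw [C.opA' hu u', hu'']

lemma mul1h {u t : J} (hu : C.M1 u) (ht : C.Mh t) : C.Mh (u * t) := by
  have ht' : C.e * t + C.e * t = t := ht
  show C.e * _ + C.e * _ = _
  rw [C.opA' hu t, ← mul_add, ht']

lemma mul10 {u v : J} (hu : C.M1 u) (hv : C.M0 v) : u * v = 0 := by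
  have hu' : C.e * u = u := hu
  have hv' : C.e * v = 0 := hv
  have h1 : C.e * (u * v) = 0 := by rw [C.opA' hu v, hv', mul_zero]
  have h2 : C.e * (u * v) = u * v := by
    rw [mul_comm u v, C.opB' hv u, hu']
    exact mul_comm u v
  rw [← h2, h1]

lemma mul0h {v t : J} (hv : C.M0 v) (ht : C.Mh t) : C.Mh (v * t) := by
  have ht' : C.e * t + C.e * t = t := ht
  show C.e * _ + C.e * _ = _
  rw [C.opB' hv t, ← add_mul, ht', mul_comm t v]

lemma mul00 {v v' : J} (hv : C.M0 v) (hv' : C.M0 v') : C.M0 (v * v') := by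
  have h' : C.e * v' = 0 := hv'
  show C.e * _ = 0
  rw [C.opB' hv v', h', zero_mul]

end Ctx
namespace Ctx
variable {J : Type*} [NonUnitalNonAssocCommRing J] (C : Ctx J)
include C

/-- For t,t' ∈ J_h : R²(t t') = R(t t'), i.e. t t' ∈ J₁ ⊕ J₀. -/
lemma sq_h {t t' : J} (ht : C.Mh t) (ht' : C.Mh t') :
    C.R (C.R (t * t')) = C.R (t * t') := by
  have ht1 : C.e * t + C.e * t = t := ht
  have ht1' : C.e * t' + C.e * t' = t' := ht'
  have P := sub_eq_zero_of_eq (C.p2e (t + t'))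
  have Pt := sub_eq_zero_of_eq (C.p2e t)
  have Pt' := sub_eq_zero_of_eq (C.p2e t')
  -- polarized doubled identity
  have POL2 : (((C.e*t)*C.e)*t' + ((C.e*t)*C.e)*t') + (((C.e*t')*C.e)*t + ((C.e*t')*C.e)*t)
      + (((t*t')*C.e)*C.e + ((t*t')*C.e)*C.e)
      = ((C.e*t)*(C.e*t') + (C.e*t)*(C.e*t') + ((C.e*t)*(C.e*t') + (C.e*t)*(C.e*t')))
      + ((t*t')*C.e + (t*t')*C.e) := by
    calc (((C.e*t)*C.e)*t' + ((C.e*t)*C.e)*t') + (((C.e*t')*C.e)*t + ((C.e*t')*C.e)*t)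
          + (((t*t')*C.e)*C.e + ((t*t')*C.e)*C.e)
        = (((C.e*t)*(C.e*t') + (C.e*t)*(C.e*t') + ((C.e*t)*(C.e*t') + (C.e*t)*(C.e*t')))
            + ((t*t')*C.e + (t*t')*C.e))
          + ((((C.e*(t+t'))*C.e)*(t+t') + ((C.e*(t+t'))*C.e)*(t+t') + (((t+t')*(t+t'))*C.e)*C.e)
             - ((C.e*(t+t'))*(C.e*(t+t')) + (C.e*(t+t'))*(C.e*(t+t')) + ((t+t')*(t+t'))*C.e))
          - ((((C.e*t)*C.e)*t + ((C.e*t)*C.e)*t + ((t*t)*C.e)*C.e)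
             - ((C.e*t)*(C.e*t) + (C.e*t)*(C.e*t) + (t*t)*C.e))
          - ((((C.e*t')*C.e)*t' + ((C.e*t')*C.e)*t' + ((t'*t')*C.e)*C.e)
             - ((C.e*t')*(C.e*t') + (C.e*t')*(C.e*t') + (t'*t')*C.e)) := by
          simp only [mul_add, add_mul, mul_comm t' t, mul_comm (C.e*t') (C.e*t)]
          abel
      _ = _ := by rw [P, Pt, Pt']; abel
  -- rewrite to e-left-nested form
  rw [mul_comm (C.e*t) C.e, mul_comm (C.e*t') C.e, mul_comm (t*t') C.e,
      mul_comm (C.e*(t*t')) C.e] at POL2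
  -- contraction identities
  have a1 : C.e*(C.e*t) + C.e*(C.e*t) = C.e*t := by rw [← mul_add, ht1]
  have a1' : C.e*(C.e*t') + C.e*(C.e*t') = C.e*t' := by rw [← mul_add, ht1']
  have s1 : (C.e*(C.e*t))*t' + (C.e*(C.e*t))*t' = (C.e*t)*t' := by rw [← add_mul, a1]
  have s2 : (C.e*(C.e*t'))*t + (C.e*(C.e*t'))*t = (C.e*t')*t := by rw [← add_mul, a1']
  have s3 : (C.e*t)*(C.e*t') + (C.e*t)*(C.e*t') + ((C.e*t)*(C.e*t') + (C.e*t)*(C.e*t'))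
      = t * t' := by
    have h' : (C.e*t + C.e*t) * (C.e*t' + C.e*t') = t*t' := by rw [ht1, ht1']
    calc (C.e*t)*(C.e*t') + (C.e*t)*(C.e*t') + ((C.e*t)*(C.e*t') + (C.e*t)*(C.e*t'))
        = (C.e*t + C.e*t) * (C.e*t' + C.e*t') := by
          rw [add_mul, mul_add]
      _ = t*t' := h'
  rw [s1, s2, s3] at POL2
  -- POL2 : (e*t)*t' + (e*t')*t + (e*(e*(tt')) + e*(e*(tt'))) = t*t' + (e*(tt') + e*(tt'))
  have s4 : (C.e*t)*t' + (C.e*t)*t' = t*t' := by rw [← add_mul, ht1]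
  have s5 : (C.e*t')*t + (C.e*t')*t = t*t' := by rw [← add_mul, ht1']; exact mul_comm t' t
  have zP := sub_eq_zero_of_eq POL2
  have z4 := sub_eq_zero_of_eq s4
  have z5 := sub_eq_zero_of_eq s5
  show C.e * (C.e * (t*t')) = C.e * (t*t')
  apply C.half
  apply C.half
  calc (C.e*(C.e*(t*t')) + C.e*(C.e*(t*t'))) + (C.e*(C.e*(t*t')) + C.e*(C.e*(t*t')))
      = ((C.e*(t*t') + C.e*(t*t')) + (C.e*(t*t') + C.e*(t*t')))
        + ((((C.e*t)*t' + (C.e*t')*t + (C.e*(C.e*(t*t')) + C.e*(C.e*(t*t'))))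
            - (t*t' + (C.e*(t*t') + C.e*(t*t'))))
          + (((C.e*t)*t' + (C.e*t')*t + (C.e*(C.e*(t*t')) + C.e*(C.e*(t*t'))))
            - (t*t' + (C.e*(t*t') + C.e*(t*t')))))
        - (((C.e*t)*t' + (C.e*t)*t') - t*t')
        - (((C.e*t')*t + (C.e*t')*t) - t*t') := by abel
    _ = (C.e*(t*t') + C.e*(t*t')) + (C.e*(t*t') + C.e*(t*t')) := by
        rw [zP, z4, z5]; abel

lemma ph_hh {t t' : J} (ht : C.Mh t) (ht' : C.Mh t') : C.ph (t * t') = 0 := by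
  unfold ph
  rw [C.sq_h ht ht']
  exact sub_self _

lemma hh_decomp {t t' : J} (ht : C.Mh t) (ht' : C.Mh t') :
    t * t' = C.p1 (t * t') + C.p0 (t * t') := by
  have h := C.p_sum (t * t')
  rw [C.ph_hh ht ht'] at h
  exact h.symm.trans (by abel)

end Ctx
namespace Ctx
variable {J : Type*} [NonUnitalNonAssocCommRing J] (C : Ctx J)
include C

omit C in
lemma iter_e {e : J} (hid : e * e = e) : ∀ k : ℕ, (fun y => e * y)^[k] e = e
  | 0 => rfl
  | (k+1) => by
      rw [Function.iterate_succ_apply]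
      show (fun y => e*y)^[k] (e*e) = e
      rw [hid]; exact iter_e hid k

omit C in
lemma getD_rep {e d : J} : ∀ (k i : ℕ), i < k → (List.replicate k e).getD i d = e
  | 0, i, h => by simp at h
  | (k+1), 0, h => rfl
  | (k+1), (i+1), h => by
      rw [List.replicate_succ, List.getD_cons_succ]
      exact getD_rep k i (by omega)

/-- The workhorse instance of `IsNDer` for chain-shaped lists. -/
lemma WN (ws : List J) (hlen : ws.length = C.n - 1) (x : J) :
    C.D (chain ws x) = (∑ i ∈ Finset.range (C.n - 1),
        chain (ws.set i (C.D (ws.getD i 0))) x) + chain ws (C.D x) := by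
  have hn := C.hn
  have hL : (ws ++ [x]).length = C.n := by simp [hlen]; omega
  have h := C.hder (ws ++ [x]) hL
  rw [rnm_append_singleton] at h
  rw [show C.n = (C.n - 1) + 1 by omega] at h
  rw [Finset.sum_range_succ] at h
  have hlast : (ws ++ [x]).set (C.n - 1) (C.D ((ws ++ [x]).getD (C.n - 1) 0))
      = ws ++ [C.D x] := by
    conv_lhs => rw [← hlen]
    rw [getD_append_eq, set_append_eq]
  rw [hlast, rnm_append_singleton] at h
  rw [h]
  congr 1
  apply Finset.sum_congr rfl
  intro i hi
  have hi' : i < ws.length := by rw [hlen]; exact Finset.mem_range.mp hi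
  rw [getD_append_lt ws i hi', set_append_lt ws i hi', rnm_append_singleton]

lemma D0 : C.D 0 = 0 := by
  have hn := C.hn
  have hlen : (((0:J) :: List.replicate (C.n - 2) C.e)).length = C.n - 1 := by
    simp; omega
  have h := C.WN ((0:J) :: List.replicate (C.n - 2) C.e) hlen 0
  rw [chain_zero] at h
  rw [Finset.sum_eq_zero (fun i _ => chain_zero _)] at h
  rw [chain_cons, zero_mul, add_zero] at h
  exact h

lemma DR (x : J) : C.D (C.R x) = C.R (C.D x) := by
  have hn := C.hn
  have hlen : ((x :: List.replicate (C.n - 2) C.e)).length = C.n - 1 := by simp; omega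
  have h := C.WN (x :: List.replicate (C.n - 2) C.e) hlen C.e
  rw [show C.n - 1 = (C.n - 2) + 1 by omega, Finset.sum_range_succ'] at h
  have hval : chain (x :: List.replicate (C.n - 2) C.e) C.e = x * C.e := by
    rw [chain_cons, chain_replicate_e, iter_e C.hid]
  have hterm0 : chain ((x :: List.replicate (C.n - 2) C.e).set 0
      (C.D ((x :: List.replicate (C.n - 2) C.e).getD 0 0))) C.e = C.D x * C.e := by
    rw [List.set_cons_zero, List.getD_cons_zero, chain_cons, chain_replicate_e, iter_e C.hid]
  have hterms : ∀ i ∈ Finset.range (C.n - 2),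
      chain ((x :: List.replicate (C.n - 2) C.e).set (i+1)
        (C.D ((x :: List.replicate (C.n - 2) C.e).getD (i+1) 0))) C.e = 0 := by
    intro i hi
    have hi' := Finset.mem_range.mp hi
    rw [List.getD_cons_succ, getD_rep _ i hi', C.hDe, List.set_cons_succ]
    rw [chain_cons, chain_set_zero _ i (by simpa using hi'), mul_zero]
  rw [Finset.sum_eq_zero hterms, zero_add, hterm0, hval, C.hDe, chain_zero, add_zero] at h
  show C.D (C.e * x) = C.e * C.D x
  rw [mul_comm C.e x, mul_comm C.e (C.D x)]
  exact h

/-- product rule for n = 2 -/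
lemma Wn2 (hn2 : C.n = 2) (x y : J) : C.D (x * y) = C.D x * y + x * C.D y := by
  have hlen : ([x]).length = C.n - 1 := by simp [hn2]
  have h := C.WN [x] hlen y
  rw [show C.n - 1 = 1 by omega] at h
  rw [Finset.sum_range_one] at h
  simpa using h

/-- uniform Leibniz rule: `D(x·Ry) = Dx·Ry + x·R(Dy)` -/
lemma W2R (x y : J) :
    C.D (x * (C.e * y)) = C.D x * (C.e * y) + x * (C.e * C.D y) := by
  have hn := C.hn
  rcases (by omega : C.n = 2 ∨ 3 ≤ C.n) with hn2 | hn3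
  · rw [C.Wn2 hn2 x (C.e * y), C.Wn2 hn2 C.e y, C.hDe, zero_mul, zero_add]
  · have hlen : ((x :: y :: List.replicate (C.n - 3) C.e)).length = C.n - 1 := by
      simp; omega
    have h := C.WN (x :: y :: List.replicate (C.n - 3) C.e) hlen C.e
    rw [show C.n - 1 = (C.n - 3) + 1 + 1 by omega, Finset.sum_range_succ',
        Finset.sum_range_succ'] at h
    have hval : chain (x :: y :: List.replicate (C.n - 3) C.e) C.e = x * (y * C.e) := by
      rw [chain_cons, chain_cons, chain_replicate_e, iter_e C.hid]
    have ht0 : chain ((x :: y :: List.replicate (C.n - 3) C.e).set 0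
        (C.D ((x :: y :: List.replicate (C.n - 3) C.e).getD 0 0))) C.e
        = C.D x * (y * C.e) := by
      rw [List.set_cons_zero, List.getD_cons_zero, chain_cons, chain_cons,
          chain_replicate_e, iter_e C.hid]
    have ht1 : chain ((x :: y :: List.replicate (C.n - 3) C.e).set 1
        (C.D ((x :: y :: List.replicate (C.n - 3) C.e).getD 1 0))) C.e
        = x * (C.D y * C.e) := by
      rw [List.getD_cons_succ, List.getD_cons_zero, List.set_cons_succ, List.set_cons_zero,
          chain_cons, chain_cons, chain_replicate_e, iter_e C.hid]
    have hterms : ∀ i ∈ Finset.range (C.n - 3),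
        chain ((x :: y :: List.replicate (C.n - 3) C.e).set (i+1+1)
          (C.D ((x :: y :: List.replicate (C.n - 3) C.e).getD (i+1+1) 0))) C.e = 0 := by
      intro i hi
      have hi' := Finset.mem_range.mp hi
      rw [List.getD_cons_succ, List.getD_cons_succ, getD_rep _ i hi', C.hDe,
          List.set_cons_succ, List.set_cons_succ, chain_cons, chain_cons,
          chain_set_zero _ i (by simpa using hi'), mul_zero, mul_zero]
    rw [Finset.sum_eq_zero hterms, zero_add, ht1, ht0, hval, C.hDe, chain_zero, add_zero] at h
    -- h : D (x * (y * e)) = D x * (y * e) + x * (D y * e)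
    rw [mul_comm y C.e, mul_comm (C.D y) C.e] at h
    rw [h]; abel

def Rit (k : ℕ) (x : J) : J := (fun y => C.e * y)^[k] x

lemma Rit_zero_iter (x : J) : C.Rit 0 x = x := rfl
lemma Rit_succ (k : ℕ) (x : J) : C.Rit (k+1) x = C.Rit k (C.R x) :=
  Function.iterate_succ_apply _ _ _
lemma Rit_succ' (k : ℕ) (x : J) : C.Rit (k+1) x = C.R (C.Rit k x) :=
  Function.iterate_succ_apply' _ _ _

lemma Rit_add (k : ℕ) (x y : J) : C.Rit k (x + y) = C.Rit k x + C.Rit k y := by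
  induction k generalizing x y with
  | zero => rfl
  | succ m ih => rw [Rit_succ, Rit_succ, Rit_succ, C.R_add, ih]

lemma Rit_sub (k : ℕ) (x y : J) : C.Rit k (x - y) = C.Rit k x - C.Rit k y := by
  induction k generalizing x y with
  | zero => rfl
  | succ m ih => rw [Rit_succ, Rit_succ, Rit_succ, C.R_sub, ih]

@[simp] lemma Rit_zero (k : ℕ) : C.Rit k (0 : J) = 0 := by
  induction k with
  | zero => rfl
  | succ m ih => rw [Rit_succ, C.R_zero, ih]

lemma Rit_M1 {x : J} (hx : C.M1 x) (k : ℕ) : C.Rit k x = x := by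
  induction k with
  | zero => rfl
  | succ m ih => rw [Rit_succ]; rw [show C.R x = x from hx]; exact ih

lemma Rit_Mh {x : J} (hx : C.Mh x) (k : ℕ) : C.Mh (C.Rit k x) := by
  induction k with
  | zero => exact hx
  | succ m ih => rw [Rit_succ']; exact C.Mh_R ih

lemma Rit_M0 {x : J} (hx : C.M0 x) (k : ℕ) : C.M0 (C.Rit k x) := by
  cases k with
  | zero => exact hx
  | succ m => rw [Rit_succ, show C.R x = 0 from hx, Rit_zero]; exact C.M0_zero

lemma Rit_smul {x : J} (hx : C.Mh x) (k : ℕ) : (2^k : ℕ) • C.Rit k x = x := by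
  induction k with
  | zero => rw [pow_zero, one_smul]; rfl
  | succ m ih =>
      rw [Rit_succ', pow_succ, mul_smul]
      have hs := C.Rit_Mh hx m
      have hs' : C.R (C.Rit m x) + C.R (C.Rit m x) = C.Rit m x := hs
      rw [show (2:ℕ) • C.R (C.Rit m x) = C.Rit m x by rw [two_smul]; exact hs']
      exact ih

/-- `D(R^[n-2](t·z)) = R^[n-2](Dt·z) + R^[n-2](t·Dz)` -/
lemma Wprime (t z : J) :
    C.D (C.Rit (C.n - 2) (t * z))
      = C.Rit (C.n - 2) (C.D t * z) + C.Rit (C.n - 2) (t * C.D z) := by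
  have hn := C.hn
  rcases (by omega : C.n = 2 ∨ 3 ≤ C.n) with hn2 | hn3
  · rw [show C.n - 2 = 0 by omega]
    exact C.Wn2 hn2 t z
  · have hlen : ((List.replicate (C.n - 2) C.e ++ [t])).length = C.n - 1 := by
      simp; omega
    have h := C.WN (List.replicate (C.n - 2) C.e ++ [t]) hlen z
    rw [show C.n - 1 = (C.n - 2) + 1 by omega, Finset.sum_range_succ] at h
    have hval : chain (List.replicate (C.n - 2) C.e ++ [t]) z
        = C.Rit (C.n - 2) (t * z) := by
      rw [chain_append_singleton, chain_replicate_e]; rfl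
    have hg : (List.replicate (C.n - 2) C.e ++ [t]).getD (C.n - 2) (0:J) = t := by
      have := getD_append_eq (List.replicate (C.n - 2) C.e) t (0:J)
      simpa using this
    have hs : (List.replicate (C.n - 2) C.e ++ [t]).set (C.n - 2) (C.D t)
        = List.replicate (C.n - 2) C.e ++ [C.D t] := by
      have := set_append_eq (List.replicate (C.n - 2) C.e) t (C.D t)
      simpa using this
    have hlast : chain ((List.replicate (C.n - 2) C.e ++ [t]).set (C.n - 2)
        (C.D ((List.replicate (C.n - 2) C.e ++ [t]).getD (C.n - 2) 0))) z
        = C.Rit (C.n - 2) (C.D t * z) := by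
      rw [hg, hs, chain_append_singleton, chain_replicate_e]
      rfl
    have hterms : ∀ i ∈ Finset.range (C.n - 2),
        chain ((List.replicate (C.n - 2) C.e ++ [t]).set i
          (C.D ((List.replicate (C.n - 2) C.e ++ [t]).getD i 0))) z = 0 := by
      intro i hi
      have hi' := Finset.mem_range.mp hi
      have hi'' : i < (List.replicate (C.n - 2) C.e).length := by simpa using hi'
      rw [getD_append_lt _ i hi'', getD_rep _ i hi', C.hDe, set_append_lt _ i hi'',
          chain_append_singleton, chain_set_zero _ i (by simpa using hi')]
    rw [Finset.sum_eq_zero hterms, zero_add, hlast, hval] at h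
    rw [chain_append_singleton, chain_replicate_e] at h
    exact h

end Ctx
namespace Ctx
variable {J : Type*} [NonUnitalNonAssocCommRing J] (C : Ctx J)
include C

lemma DM1 {x : J} (hx : C.M1 x) : C.M1 (C.D x) := by
  show C.R (C.D x) = C.D x
  rw [← C.DR, show C.R x = x from hx]

lemma DM0 {x : J} (hx : C.M0 x) : C.M0 (C.D x) := by
  show C.R (C.D x) = 0
  rw [← C.DR, show C.R x = 0 from hx, C.D0]

lemma p0_R (x : J) : C.p0 (C.R x) = 0 := by
  unfold p0
  calc C.R x + (C.R (C.R (C.R x)) + C.R (C.R (C.R x)))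
        - (C.R (C.R x) + C.R (C.R x) + C.R (C.R x))
      = (C.R (C.R (C.R x)) + C.R (C.R (C.R x)) + C.R x)
        - (C.R (C.R x) + C.R (C.R x) + C.R (C.R x)) := by abel
    _ = 0 := by rw [C.cube' x]; exact sub_self _

lemma DMh {t : J} (ht : C.Mh t) : C.Mh (C.D t) := by
  have ht1 : C.e * t + C.e * t = t := ht
  have a1 : C.e*(C.e*t) + C.e*(C.e*t) = C.e*t := by rw [← mul_add, ht1]
  -- part (a): p1 (D t) = 0
  have hEE : C.M1 (C.e + C.e) := C.M1_add C.M1_e C.M1_e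
  have hprod : (C.e + C.e) * (C.e*t) = C.e * t := by rw [add_mul]; exact a1
  have hW := C.W2R (C.e + C.e) t
  rw [hprod, add_mul] at hW
  have hDR' : C.D (C.e * t) = C.e * C.D t := C.DR t
  rw [hDR'] at hW
  -- hW : e*Dt = D(e+e)*(e*t) + (e*(e*Dt) + e*(e*Dt))
  set d := C.D t with hd
  have hsum := C.p_sum d
  have hm1 : C.e * C.p1 d = C.p1 d := C.mem_p1 d
  have hm0 : C.e * C.p0 d = 0 := C.mem_p0 d
  have hRd : C.e * d = C.p1 d + C.e * C.ph d := by
    conv_lhs => rw [← hsum]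
    rw [mul_add, mul_add, hm1, hm0, add_zero]
  have hR2d : C.e * (C.e * d) = C.p1 d + C.e * (C.e * C.ph d) := by
    rw [hRd, mul_add, hm1]
  have hph2 : C.e*(C.e*C.ph d) + C.e*(C.e*C.ph d) = C.e * C.ph d := by
    have h' := congrArg (fun w => C.e * w) (C.mem_ph d)
    simpa [mul_add, Ctx.R] using h'
  rw [hR2d, hRd] at hW
  set q := C.D (C.e+C.e) * (C.e*t) with hqdef
  have hq : C.p1 d + q = 0 := by
    have h' : C.p1 d + C.e*C.ph d = (C.p1 d + q) + (C.p1 d + C.e * C.ph d) := by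
      calc C.p1 d + C.e*C.ph d
          = q + ((C.p1 d + C.e*(C.e*C.ph d)) + (C.p1 d + C.e*(C.e*C.ph d))) := hW
        _ = (C.p1 d + q) + (C.p1 d + (C.e*(C.e*C.ph d) + C.e*(C.e*C.ph d))) := by abel
        _ = (C.p1 d + q) + (C.p1 d + C.e * C.ph d) := by rw [hph2]
    have h'' : (C.p1 d + q) + (C.p1 d + C.e*C.ph d) = 0 + (C.p1 d + C.e*C.ph d) := by
      rw [zero_add]; exact h'.symm
    exact add_right_cancel h''
  have hqMh : C.Mh q := C.mul1h (C.DM1 hEE) (C.Mh_R ht)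
  have hdir := C.direct3 (C.mem_p1 d) hqMh C.M0_zero (by rw [add_zero]; exact hq)
  -- part (b): p0 (D t) = 0
  have b1 : C.e * (C.e*t + C.e*t) = C.e * t := by rw [mul_add]; exact a1
  have h4v : C.e * (C.e * (t+t+t+t)) = t := by
    have hh : C.e*(t+t+t+t) = (C.e*t + C.e*t) + (C.e*t + C.e*t) := by
      rw [mul_add, mul_add, mul_add]; abel
    rw [hh, mul_add, b1, ht1]
  have hWb := C.W2R C.e (t+t+t+t)
  rw [C.hDe, zero_mul, zero_add, h4v] at hWb
  have hp0 : C.p0 d = 0 := by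
    rw [hd, hWb]
    exact C.p0_R (C.e * C.D (t+t+t+t))
  have hrep : d = C.ph d := by
    conv_lhs => rw [← hsum]
    rw [hdir.1, hp0, zero_add, add_zero]
  rw [hrep]
  exact C.mem_ph d

/-- `D(t + t) = D t + D t` for `t ∈ J_h`. -/
lemma sigma0 {t : J} (ht : C.Mh t) : C.D (t + t) = C.D t + C.D t := by
  have ht1 : C.e * t + C.e * t = t := ht
  have hDt : C.e * C.D t + C.e * C.D t = C.D t := C.DMh ht
  have hY : C.e * C.D (t+t) + C.e * C.D (t+t) = C.D (t+t) := C.DMh (C.Mh_add ht ht)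
  have hW := C.W2R C.e (t+t)
  rw [C.hDe, zero_mul, zero_add] at hW
  have hval : C.e * (C.e * (t+t)) = C.e * t := by rw [mul_add]; exact congrArg (C.e * ·) ht1
  rw [hval] at hW
  -- hW : D (e*t) = e*(e*D(t+t))
  have hDR' : C.D (C.e * t) = C.e * C.D t := C.DR t
  rw [hDR'] at hW
  -- hW : e * D t = e * (e * D(t+t))
  have hY2 : C.e*(C.e*C.D (t+t)) + C.e*(C.e*C.D (t+t)) = C.e * C.D (t+t) := by
    have h' := congrArg (fun w => C.e * w) hY
    simpa [mul_add] using h'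
  have hDt_eq : C.D t = C.e * C.D (t+t) := by
    calc C.D t = C.e * C.D t + C.e * C.D t := hDt.symm
      _ = C.e*(C.e*C.D (t+t)) + C.e*(C.e*C.D (t+t)) := by rw [← hW]
      _ = C.e * C.D (t+t) := hY2
  calc C.D (t+t) = C.e * C.D (t+t) + C.e * C.D (t+t) := hY.symm
    _ = C.D t + C.D t := by rw [← hDt_eq]

lemma chain_kill1 : ∀ (l : List J), (∀ w ∈ l, C.M0 w) → l ≠ [] →
    ∀ u : J, C.M1 u → chain l u = 0
  | [], _, hne, _, _ => absurd rfl hne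
  | [w], h, _, u, hu => by
      have hw := h w (by simp)
      show w * u = 0
      rw [mul_comm]; exact C.mul10 hu hw
  | (w :: a :: rest), h, _, u, hu => by
      show w * chain (a :: rest) u = 0
      rw [chain_kill1 (a :: rest) (fun z hz => h z (by simp at hz ⊢; tauto)) (by simp) u hu,
          mul_zero]

lemma chain_Mh : ∀ (l : List J), (∀ w ∈ l, C.M0 w) → ∀ {x : J}, C.Mh x → C.Mh (chain l x)
  | [], _, x, hx => hx
  | (w :: rest), h, x, hx => by
      show C.Mh (w * chain rest x)
      exact C.mul0h (h w (by simp))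
        (chain_Mh rest (fun z hz => h z (by simp [hz])) hx)

lemma chain_M0 : ∀ (l : List J), (∀ w ∈ l, C.M0 w) → ∀ {x : J}, C.M0 x → C.M0 (chain l x)
  | [], _, x, hx => hx
  | (w :: rest), h, x, hx => by
      show C.M0 (w * chain rest x)
      exact C.mul00 (h w (by simp))
        (chain_M0 rest (fun z hz => h z (by simp [hz])) hx)

lemma peel_h : ∀ (K : ℕ) (x : J), C.Mh x →
    (∀ l : List J, l.length = K → (∀ w ∈ l, C.M0 w) → chain l x = 0) → x = 0
  | 0, x, _, h => h [] rfl (by simp)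
  | (K+1), x, hx, h => by
      apply C.hc3 x hx
      intro w hw
      apply peel_h K (w * x) (C.mul0h hw hx)
      intro l hl hall
      have hh := h (l ++ [w]) (by simp [hl]) ?_
      · rwa [chain_append_singleton] at hh
      · intro z hz
        rcases List.mem_append.mp hz with h1 | h2
        · exact hall z h1
        · rw [List.mem_singleton.mp h2]; exact hw

lemma peel_0 : ∀ (K : ℕ) (x : J), C.M0 x →
    (∀ l : List J, l.length = K → (∀ w ∈ l, C.M0 w) → chain l x = 0) → x = 0
  | 0, x, _, h => h [] rfl (by simp)
  | (K+1), x, hx, h => by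
      apply C.hc2 x hx
      intro w hw
      apply peel_0 K (w * x) (C.mul00 hw hx)
      intro l hl hall
      have hh := h (l ++ [w]) (by simp [hl]) ?_
      · rwa [chain_append_singleton] at hh
      · intro z hz
        rcases List.mem_append.mp hz with h1 | h2
        · exact hall z h1
        · rw [List.mem_singleton.mp h2]; exact hw

end Ctx
namespace Ctx
variable {J : Type*} [NonUnitalNonAssocCommRing J] (C : Ctx J)
include C

lemma dd_comm (x y : J) : C.dd x y = C.dd y x := by
  unfold dd; rw [add_comm]; abel

lemma cocycle (a b c : J) :
    C.dd a b + C.dd (a+b) c = C.dd b c + C.dd a (b+c) := by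
  unfold dd; rw [add_assoc]; abel

lemma addD {x y : J} (h : C.dd x y = 0) : C.D (x+y) = C.D x + C.D y := by
  have h1 := eq_of_sub_eq_zero h
  have h2 := eq_add_of_sub_eq h1
  rw [h2]; abel

/-- If all `J₀`-chains kill δ, then δ ∈ J₁. -/
lemma M1_of_chains {δ : J}
    (hch : ∀ l : List J, l.length = C.n - 1 → (∀ w ∈ l, C.M0 w) → chain l δ = 0) :
    C.M1 δ := by
  have hn := C.hn
  have key : ∀ l : List J, l.length = C.n - 1 → (∀ w ∈ l, C.M0 w) →
      chain l (C.ph δ) = 0 ∧ chain l (C.p0 δ) = 0 := by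
    intro l hl hall
    have hne : l ≠ [] := by
      intro hnil; rw [hnil] at hl; simp at hl; omega
    have hδ : δ = C.p1 δ + (C.ph δ + C.p0 δ) := by
      conv_lhs => rw [← C.p_sum δ]
      abel
    have h0 : chain l (C.p1 δ) + (chain l (C.ph δ) + chain l (C.p0 δ)) = 0 := by
      rw [← chain_add, ← chain_add, ← hδ]
      exact hch l hl hall
    rw [C.chain_kill1 l hall hne _ (C.mem_p1 δ), zero_add] at h0
    have hpair := C.direct3 C.M1_zero (C.chain_Mh l hall (C.mem_ph δ))
      (C.chain_M0 l hall (C.mem_p0 δ)) (by rw [zero_add]; rw [← h0])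
    exact ⟨hpair.2.1, hpair.2.2⟩
  have hph : C.ph δ = 0 :=
    C.peel_h (C.n - 1) _ (C.mem_ph δ) (fun l hl hall => (key l hl hall).1)
  have hp0 : C.p0 δ = 0 :=
    C.peel_0 (C.n - 1) _ (C.mem_p0 δ) (fun l hl hall => (key l hl hall).2)
  have : δ = C.p1 δ := by
    conv_lhs => rw [← C.p_sum δ]
    rw [hph, hp0, add_zero, add_zero]
  rw [this]; exact C.mem_p1 δ

/-- K8 partial : for u ∈ J₁, p ∈ J_h, v ∈ J₀, the defect dd u (p+v) lies in J₁. -/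
lemma K8p {u p v : J} (hu : C.M1 u) (hp : C.Mh p) (hv : C.M0 v) :
    C.M1 (C.dd u (p + v)) := by
  have hn := C.hn
  apply C.M1_of_chains
  intro ws hlen hall
  have hne : ws ≠ [] := by
    intro hnil; rw [hnil] at hlen; simp at hlen; omega
  have w1 := C.WN ws hlen (u + (p+v))
  have w2 := C.WN ws hlen (p+v)
  have hcv : chain ws (u + (p+v)) = chain ws (p+v) := by
    rw [chain_add, C.chain_kill1 ws hall hne u hu, zero_add]
  have hallmod : ∀ i, i < C.n - 1 → ∀ z ∈ ws.set i (C.D (ws.getD i 0)), C.M0 z := by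
    intro i hi z hz
    rcases List.mem_or_eq_of_mem_set hz with h1 | h2
    · exact hall z h1
    · rw [h2]
      have hi' : i < ws.length := by omega
      have hmem : ws.getD i 0 ∈ ws := by
        rw [List.getD_eq_getElem ws 0 hi']
        exact List.getElem_mem hi'
      exact C.DM0 (hall _ hmem)
  have hsum : ∀ i ∈ Finset.range (C.n - 1),
      chain (ws.set i (C.D (ws.getD i 0))) (u + (p+v))
        = chain (ws.set i (C.D (ws.getD i 0))) (p+v) := by
    intro i hi
    have hi' := Finset.mem_range.mp hi
    have hne' : ws.set i (C.D (ws.getD i 0)) ≠ [] := by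
      intro hnil
      have := congrArg List.length hnil
      rw [List.length_set, hlen] at this
      simp at this; omega
    rw [chain_add, C.chain_kill1 _ (hallmod i hi') hne' u hu, zero_add]
  have heq : C.D (chain ws (u + (p+v))) = C.D (chain ws (p+v)) := by rw [hcv]
  rw [w1, w2, Finset.sum_congr rfl hsum] at heq
  have heq2 : chain ws (C.D (u + (p+v))) = chain ws (C.D (p+v)) := add_left_cancel heq
  have heq3 : chain ws (C.D (u + (p+v)) - C.D (p+v)) = 0 := by
    rw [chain_sub, heq2, sub_self]
  have hdec : C.D (u + (p+v)) - C.D (p+v) = C.D u + C.dd u (p+v) := by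
    unfold dd; abel
  rw [hdec, chain_add, C.chain_kill1 ws hall hne _ (C.DM1 hu), zero_add] at heq3
  exact heq3

lemma M1p {u p : J} (hu : C.M1 u) (hp : C.Mh p) : C.M1 (C.dd u p) := by
  have := C.K8p hu hp C.M0_zero
  rwa [add_zero] at this

lemma M2p {v t : J} (hv : C.M0 v) (ht : C.Mh t) : C.M0 (C.dd v t) := by
  have hcol : C.R (v + t) = C.R t := by
    show C.e*(v+t) = C.e*t
    rw [mul_add, show C.e*v = 0 from hv, zero_add]
  have h1 := C.DR (v+t)
  rw [hcol] at h1
  have h2 : C.R (C.D (v+t)) = C.R (C.D t) := h1.symm.trans (C.DR t)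
  have hRδ : C.R (C.dd v t) = 0 := by
    show C.e * (C.D (v+t) - C.D v - C.D t) = 0
    rw [mul_sub, mul_sub, show C.e * C.D v = 0 from C.DM0 hv, sub_zero]
    show C.e * C.D (v+t) - C.e * C.D t = 0
    rw [show C.e * C.D (v+t) = C.R (C.D (v+t)) from rfl,
        show C.e * C.D t = C.R (C.D t) from rfl, h2, sub_self]
  set δ := C.dd v t with hδdef
  have hm1 : C.e * C.p1 δ = C.p1 δ := C.mem_p1 δ
  have hm0 : C.e * C.p0 δ = 0 := C.mem_p0 δ
  have hRd : C.p1 δ + C.e * C.ph δ = 0 := by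
    have h' : C.e * δ = C.p1 δ + C.e * C.ph δ := by
      conv_lhs => rw [← C.p_sum δ]
      rw [mul_add, mul_add, hm1, hm0, add_zero]
    rw [← h']; exact hRδ
  have hdir := C.direct3 (C.mem_p1 δ) (C.Mh_R (C.mem_ph δ)) C.M0_zero
    (by rw [add_zero]; exact hRd)
  have hphδ : C.ph δ = 0 := by
    have h' : C.e * C.ph δ + C.e * C.ph δ = C.ph δ := C.mem_ph δ
    rw [show C.e * C.ph δ = C.R (C.ph δ) from rfl] at h'
    have h'' : C.R (C.ph δ) = 0 := hdir.2.1
    rw [h'', add_zero] at h'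
    exact h'.symm
  have hrep : δ = C.p0 δ := by
    conv_lhs => rw [← C.p_sum δ]
    rw [hdir.1, hphδ, zero_add, zero_add]
  rw [hrep]; exact C.mem_p0 δ

lemma M0full {u v : J} (hu : C.M1 u) (hv : C.M0 v) : C.dd u v = 0 := by
  have hM1δ : C.M1 (C.dd u v) := by
    have := C.K8p hu C.Mh_zero hv
    rwa [zero_add] at this
  have hcol : C.R (u + v) = u := by
    show C.e*(u+v) = u
    rw [mul_add, show C.e*u = u from hu, show C.e*v = 0 from hv, add_zero]
  have h1 := C.DR (u+v)
  rw [hcol] at h1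
  have hRδ : C.R (C.dd u v) = 0 := by
    show C.e * (C.D (u+v) - C.D u - C.D v) = 0
    rw [mul_sub, mul_sub, show C.e * C.D v = 0 from C.DM0 hv, sub_zero,
        show C.e * C.D (u+v) = C.R (C.D (u+v)) from rfl, ← h1,
        show C.e * C.D u = C.R (C.D u) from rfl, show C.R (C.D u) = C.D u from C.DM1 hu,
        sub_self]
  rw [← show C.R (C.dd u v) = C.dd u v from hM1δ]
  exact hRδ

/-- full M1 additivity : dd u t = 0 for u ∈ J₁, t ∈ J_h. -/
lemma M1full {u t : J} (hu : C.M1 u) (ht : C.Mh t) : C.dd u t = 0 := by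
  have hδ : C.M1 (C.dd u t) := C.M1p hu ht
  apply C.hc1 _ hδ
  intro t' ht'
  have i1 := C.W2R t' (u+t)
  have i2 := C.W2R t' u
  have i3 := C.W2R t' t
  have heu : C.e * (u + t) = u + C.e*t := by
    rw [mul_add, show C.e*u = u from hu]
  rw [heu] at i1
  rw [show C.e * u = u from hu] at i2
  have trans : C.dd (t'*u) (t'*(C.e*t)) = t' * (C.e * C.dd u t) := by
    unfold dd
    rw [← mul_add t' u (C.e*t), i1, i2, i3]
    have h3 : t'*(C.e*C.D (u+t)) - t'*(C.e*C.D u) - t'*(C.e*C.D t)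
        = t'*(C.e * (C.D (u+t) - C.D u - C.D t)) := by
      rw [mul_sub C.e, mul_sub C.e, mul_sub t', mul_sub t']
    calc C.D t' * (u + C.e*t) + t'*(C.e*C.D (u+t))
          - (C.D t' * u + t'*(C.e*C.D u)) - (C.D t' * (C.e*t) + t'*(C.e*C.D t))
        = (C.D t' * (u + C.e*t) - C.D t' * u - C.D t' * (C.e*t))
          + (t'*(C.e*C.D (u+t)) - t'*(C.e*C.D u) - t'*(C.e*C.D t)) := by abel
      _ = t'*(C.e * (C.D (u+t) - C.D u - C.D t)) := by
          rw [mul_add (C.D t') u (C.e*t), h3]; abel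
      _ = t' * (C.e * C.dd u t) := rfl
  have heδ : C.e * C.dd u t = C.dd u t := hδ
  rw [heδ] at trans
  set P := t' * u with hPdef
  set m := t' * (C.e * t) with hmdef
  have hP : C.Mh P := by
    rw [hPdef, mul_comm]
    exact C.mul1h hu ht'
  have hm_dec : m = C.p1 m + C.p0 m := C.hh_decomp ht' (C.Mh_R ht)
  have hDm : C.D m = C.D (C.p1 m) + C.D (C.p0 m) := by
    have h0 : C.D (C.p1 m + C.p0 m) = C.D (C.p1 m) + C.D (C.p0 m) :=
      C.addD (C.M0full (C.mem_p1 m) (C.mem_p0 m))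
    rw [← h0]
    exact congrArg C.D hm_dec
  have hsplit : C.dd P m = C.dd P (C.p1 m) + C.dd (P + C.p1 m) (C.p0 m) := by
    unfold dd
    rw [hDm]
    have hPm : P + m = P + C.p1 m + C.p0 m := by
      conv_lhs => rw [hm_dec]
      rw [add_assoc]
    rw [hPm]; abel
  have hA : C.M1 (C.dd P (C.p1 m)) := by
    rw [C.dd_comm]; exact C.M1p (C.mem_p1 m) hP
  have hcoc := C.cocycle (C.p1 m) P (C.p0 m)
  have hB : C.dd (P + C.p1 m) (C.p0 m)
      = C.dd P (C.p0 m) + C.dd (C.p1 m) (P + C.p0 m) - C.dd (C.p1 m) P := by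
    rw [add_comm P (C.p1 m)]
    rw [← hcoc]; abel
  have hB0 : C.M0 (C.dd P (C.p0 m)) := by
    rw [C.dd_comm]; exact C.M2p (C.mem_p0 m) hP
  have hB1 : C.M1 (C.dd (C.p1 m) (P + C.p0 m)) := C.K8p (C.mem_p1 m) hP (C.mem_p0 m)
  have hB1' : C.M1 (C.dd (C.p1 m) P) := C.M1p (C.mem_p1 m) hP
  have htd : C.Mh (t' * C.dd u t) := by
    rw [mul_comm]; exact C.mul1h hδ ht'
  have hX1 : C.M1 (C.dd P (C.p1 m) + (C.dd (C.p1 m) (P + C.p0 m) - C.dd (C.p1 m) P)) :=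
    C.M1_add hA (C.M1_sub hB1 hB1')
  have heq : (C.dd P (C.p1 m) + (C.dd (C.p1 m) (P + C.p0 m) - C.dd (C.p1 m) P))
      + (-(t' * C.dd u t)) + C.dd P (C.p0 m) = 0 := by
    rw [← trans, hsplit, hB]; abel
  have hdir := C.direct3 hX1 (C.Mh_neg htd) hB0 heq
  have hres := hdir.2.1
  rwa [neg_eq_zero] at hres

/-- full M2 additivity : dd v t = 0 for v ∈ J₀, t ∈ J_h. -/
lemma M2full {v t : J} (hv : C.M0 v) (ht : C.Mh t) : C.dd v t = 0 := by
  have hξ : C.M0 (C.dd v t) := C.M2p hv ht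
  apply C.hc1' _ hξ
  intro t'' ht''
  set k := C.n - 2 with hk
  have j1 := C.Wprime t'' (v+t)
  have j2 := C.Wprime t'' v
  have j3 := C.Wprime t'' t
  have hval : C.Rit k (t''*(v+t)) = C.Rit k (t''*v) + C.Rit k (t''*t) := by
    rw [mul_add, C.Rit_add]
  have trans : C.dd (C.Rit k (t''*v)) (C.Rit k (t''*t)) = C.Rit k (t'' * C.dd v t) := by
    unfold dd
    rw [← hval, j1, j2, j3]
    have hD' : C.Rit k (C.D t''*(v+t)) - C.Rit k (C.D t''*v) - C.Rit k (C.D t''*t) = 0 := by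
      rw [← C.Rit_sub, ← C.Rit_sub, mul_add]
      rw [show C.D t''*v + C.D t''*t - C.D t''*v - C.D t''*t = 0 by abel, C.Rit_zero]
    have hD'' : C.Rit k (t''*C.D (v+t)) - C.Rit k (t''*C.D v) - C.Rit k (t''*C.D t)
        = C.Rit k (t'' * C.dd v t) := by
      rw [← C.Rit_sub, ← C.Rit_sub, ← mul_sub, ← mul_sub]
      rfl
    calc C.Rit k (C.D t''*(v+t)) + C.Rit k (t''*C.D (v+t))
          - (C.Rit k (C.D t''*v) + C.Rit k (t''*C.D v))
          - (C.Rit k (C.D t''*t) + C.Rit k (t''*C.D t))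
        = (C.Rit k (C.D t''*(v+t)) - C.Rit k (C.D t''*v) - C.Rit k (C.D t''*t))
          + (C.Rit k (t''*C.D (v+t)) - C.Rit k (t''*C.D v) - C.Rit k (t''*C.D t)) := by abel
      _ = C.Rit k (t'' * C.dd v t) := by rw [hD', hD'', zero_add]
  have hP' : C.Mh (C.Rit k (t''*v)) := by
    apply C.Rit_Mh
    rw [mul_comm]; exact C.mul0h hv ht''
  have htt_dec : t''*t = C.p1 (t''*t) + C.p0 (t''*t) := C.hh_decomp ht'' ht
  have hM' : C.Rit k (t''*t) = C.p1 (t''*t) + C.Rit k (C.p0 (t''*t)) := by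
    conv_lhs => rw [htt_dec]
    rw [C.Rit_add, C.Rit_M1 (C.mem_p1 _)]
  set m1 := C.p1 (t''*t) with hm1def
  set v' := C.Rit k (C.p0 (t''*t)) with hv'def
  have hv'M0 : C.M0 v' := C.Rit_M0 (C.mem_p0 _) k
  have hm1M1 : C.M1 m1 := C.mem_p1 _
  have hsplit : C.dd (C.Rit k (t''*v)) (m1 + v')
      = C.dd (C.Rit k (t''*v)) m1 + C.dd (C.Rit k (t''*v) + m1) v' := by
    unfold dd
    have hDm : C.D (m1 + v') = C.D m1 + C.D v' := C.addD (C.M0full hm1M1 hv'M0)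
    rw [hDm, ← add_assoc]
    abel
  have hA : C.dd (C.Rit k (t''*v)) m1 = 0 := by
    rw [C.dd_comm]; exact C.M1full hm1M1 hP'
  have hcoc := C.cocycle m1 (C.Rit k (t''*v)) v'
  have hB : C.dd (C.Rit k (t''*v) + m1) v'
      = C.dd (C.Rit k (t''*v)) v' + C.dd m1 (C.Rit k (t''*v) + v')
        - C.dd m1 (C.Rit k (t''*v)) := by
    rw [add_comm (C.Rit k (t''*v)) m1, ← hcoc]; abel
  have hB0 : C.M0 (C.dd (C.Rit k (t''*v)) v') := by
    rw [C.dd_comm]; exact C.M2p hv'M0 hP'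
  have hB1 : C.M1 (C.dd m1 (C.Rit k (t''*v) + v')) := C.K8p hm1M1 hP' hv'M0
  have hB1' : C.dd m1 (C.Rit k (t''*v)) = 0 := C.M1full hm1M1 hP'
  have htd : C.Mh (t'' * C.dd v t) := by
    rw [mul_comm]; exact C.mul0h hξ ht''
  have hLMh : C.Mh (C.Rit k (t'' * C.dd v t)) := C.Rit_Mh htd k
  have heq : C.dd m1 (C.Rit k (t''*v) + v')
      + (-(C.Rit k (t'' * C.dd v t))) + C.dd (C.Rit k (t''*v)) v' = 0 := by
    rw [← trans, hM', hsplit, hA, hB, hB1']; abel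
  have hdir := C.direct3 hB1 (C.Mh_neg hLMh) hB0 heq
  have hRit0 : C.Rit k (t'' * C.dd v t) = 0 := by
    have := hdir.2.1; rwa [neg_eq_zero] at this
  have hsc := C.Rit_smul htd k
  rw [hRit0, smul_zero] at hsc
  exact hsc.symm

end Ctx
namespace Ctx
variable {J : Type*} [NonUnitalNonAssocCommRing J] (C : Ctx J)
include C

lemma K70full {u p v : J} (hu : C.M1 u) (hp : C.Mh p) (hv : C.M0 v) :
    C.dd (u + p) v = 0 := by
  have hn := C.hn
  -- (a) membership in J₁ via chains
  have hM1 : C.M1 (C.dd (u + p) v) := by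
    apply C.M1_of_chains
    intro ws hlen hall
    have hne : ws ≠ [] := by
      intro hnil; rw [hnil] at hlen; simp at hlen; omega
    have w1 := C.WN ws hlen ((u+p)+v)
    have w2 := C.WN ws hlen (u+p)
    have w3 := C.WN ws hlen v
    have hcv1 : chain ws ((u+p)+v) = chain ws p + chain ws v := by
      rw [chain_add, chain_add, C.chain_kill1 ws hall hne u hu, zero_add]
    have hcv2 : chain ws (u+p) = chain ws p := by
      rw [chain_add, C.chain_kill1 ws hall hne u hu, zero_add]
    have hdd0 : C.dd (chain ws p) (chain ws v) = 0 := by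
      rw [C.dd_comm]
      exact C.M2full (C.chain_M0 ws hall hv) (C.chain_Mh ws hall hp)
    have e1 : chain ws (C.D ((u+p)+v)) = C.D (chain ws ((u+p)+v))
        - ∑ i ∈ Finset.range (C.n-1), chain (ws.set i (C.D (ws.getD i 0))) ((u+p)+v) := by
      rw [w1]; abel
    have e2 : chain ws (C.D (u+p)) = C.D (chain ws (u+p))
        - ∑ i ∈ Finset.range (C.n-1), chain (ws.set i (C.D (ws.getD i 0))) (u+p) := by
      rw [w2]; abel
    have e3 : chain ws (C.D v) = C.D (chain ws v)
        - ∑ i ∈ Finset.range (C.n-1), chain (ws.set i (C.D (ws.getD i 0))) v := by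
      rw [w3]; abel
    have hsumeq : ∑ i ∈ Finset.range (C.n-1), chain (ws.set i (C.D (ws.getD i 0))) ((u+p)+v)
        = (∑ i ∈ Finset.range (C.n-1), chain (ws.set i (C.D (ws.getD i 0))) (u+p))
          + (∑ i ∈ Finset.range (C.n-1), chain (ws.set i (C.D (ws.getD i 0))) v) := by
      rw [← Finset.sum_add_distrib]
      exact Finset.sum_congr rfl (fun i _ => chain_add _ _ _)
    show chain ws (C.D ((u+p)+v) - C.D (u+p) - C.D v) = 0
    rw [chain_sub, chain_sub, e1, e2, e3, hcv1, hcv2, hsumeq, C.addD hdd0]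
    abel
  -- (b) kill with J_h multipliers
  apply C.hc1 _ hM1
  intro t ht
  have k1 := C.W2R t ((u+p)+v)
  have k2 := C.W2R t (u+p)
  have he2 : C.e * (u+p) = u + C.e*p := by
    rw [mul_add, show C.e*u = u from hu]
  have he1 : C.e * ((u+p)+v) = u + C.e*p := by
    rw [mul_add, he2, show C.e*v = 0 from hv, add_zero]
  rw [he1] at k1
  rw [he2] at k2
  have hcanc : t*(C.e * C.D ((u+p)+v)) = t*(C.e * C.D (u+p)) := by
    have := k1.symm.trans k2
    exact add_left_cancel this
  have hDv : C.e * C.D v = 0 := C.DM0 hv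
  have : t * (C.e * C.dd (u+p) v) = 0 := by
    show t * (C.e * (C.D ((u+p)+v) - C.D (u+p) - C.D v)) = 0
    rw [mul_sub C.e, mul_sub C.e, hDv, sub_zero, mul_sub t, hcanc, sub_self]
  rwa [show C.e * C.dd (u+p) v = C.dd (u+p) v from hM1] at this

lemma K8full {u p v : J} (hu : C.M1 u) (hp : C.Mh p) (hv : C.M0 v) :
    C.dd u (p + v) = 0 := by
  have hcoc := C.cocycle u p v
  rw [C.M1full hu hp, C.K70full hu hp hv, C.dd_comm p v, C.M2full hv hp] at hcoc
  simpa using hcoc.symm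

lemma compAdd {a b c : J} (h1 : C.M1 a) (hh : C.Mh b) (h0 : C.M0 c) :
    C.D (a + b + c) = C.D a + C.D b + C.D c := by
  have e2 : C.D (b + c) = C.D b + C.D c := by
    have h' := C.addD (C.M2full h0 hh)
    rw [add_comm c b] at h'
    rw [h', add_comm]
  rw [add_assoc, C.addD (C.K8full h1 hh h0), e2, add_assoc]

lemma GammaR {t t' : J} (ht : C.Mh t) (ht' : C.Mh t') :
    C.D (C.R t + C.R t') = C.D (C.R t) + C.D (C.R t') := by
  have ht1 : C.e * t + C.e * t = t := ht
  have ht1' : C.e * t' + C.e * t' = t' := ht'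
  have hW := C.W2R (C.e + t) (C.e + (t' + t'))
  have hB : C.e * (C.e + (t' + t')) = C.e + t' := by
    rw [mul_add, C.hid, mul_add, ht1']
  rw [hB] at hW
  have hDA : C.D (C.e + t) = C.D t := by
    have h0 := C.addD (C.M1full C.M1_e ht)
    rw [h0, C.hDe, zero_add]
  have hDB : C.D (C.e + (t'+t')) = C.D t' + C.D t' := by
    have h0 := C.addD (C.M1full C.M1_e (C.Mh_add ht' ht'))
    rw [h0, C.hDe, zero_add, C.sigma0 ht']
  rw [hDA, hDB] at hW
  have hDt' : C.e * (C.D t' + C.D t') = C.D t' := by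
    rw [mul_add]; exact C.DMh ht'
  rw [hDt'] at hW
  have hVal : (C.e + t)*(C.e + t') = (C.e + C.p1 (t*t')) + (C.e*t + C.e*t') + C.p0 (t*t') := by
    rw [add_mul, mul_add, mul_add, C.hid, mul_comm t C.e]
    conv_lhs => rw [C.hh_decomp ht ht']
    abel
  rw [hVal] at hW
  rw [C.compAdd (C.M1_add C.M1_e (C.mem_p1 (t*t')))
      (show C.Mh (C.e*t + C.e*t') from C.Mh_add (C.Mh_R ht) (C.Mh_R ht'))
      (C.mem_p0 (t*t'))] at hW
  have hRHS : C.D t * (C.e + t') + (C.e + t) * C.D t'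
      = (C.p1 (C.D t * t') + C.p1 (t * C.D t'))
        + (C.e * C.D t + C.e * C.D t')
        + (C.p0 (C.D t * t') + C.p0 (t * C.D t')) := by
    rw [mul_add, add_mul, mul_comm (C.D t) C.e]
    conv_lhs => rw [C.hh_decomp (C.DMh ht) ht', C.hh_decomp ht (C.DMh ht')]
    abel
  rw [hRHS] at hW
  have hcomp := C.eqComp
    (C.DM1 (C.M1_add C.M1_e (C.mem_p1 _)))
    (C.DMh (show C.Mh (C.e*t + C.e*t') from C.Mh_add (C.Mh_R ht) (C.Mh_R ht')))
    (C.DM0 (C.mem_p0 _))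
    (C.M1_add (C.mem_p1 _) (C.mem_p1 _))
    (show C.Mh (C.e * C.D t + C.e * C.D t') from
      C.Mh_add (C.Mh_R (C.DMh ht)) (C.Mh_R (C.DMh ht')))
    (C.M0_add (C.mem_p0 _) (C.mem_p0 _)) hW
  have hmid := hcomp.2.1
  show C.D (C.R t + C.R t') = C.D (C.R t) + C.D (C.R t')
  rw [C.DR, C.DR]
  exact hmid

/-- full additivity on J_h -/
lemma MhAdd {s s' : J} (hs : C.Mh s) (hs' : C.Mh s') :
    C.D (s + s') = C.D s + C.D s' := by
  have h1 : C.R (s + s) = s := by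
    show C.e * (s+s) = s
    rw [mul_add]; exact hs
  have h1' : C.R (s' + s') = s' := by
    show C.e * (s'+s') = s'
    rw [mul_add]; exact hs'
  have h := C.GammaR (C.Mh_add hs hs) (C.Mh_add hs' hs')
  rw [h1, h1'] at h
  exact h

/-- additivity on J₁ -/
lemma finale1 {a b : J} (ha : C.M1 a) (hb : C.M1 b) :
    C.D (a + b) = C.D a + C.D b := by
  suffices hdd : C.dd a b = 0 from C.addD hdd
  have hδ : C.M1 (C.dd a b) :=
    C.M1_sub (C.M1_sub (C.DM1 (C.M1_add ha hb)) (C.DM1 ha)) (C.DM1 hb)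
  apply C.hc1 _ hδ
  intro t ht
  have i1 := C.W2R t (a+b)
  have i2 := C.W2R t a
  have i3 := C.W2R t b
  rw [show C.e*(a+b) = a+b from C.M1_add ha hb] at i1
  rw [show C.e*a = a from ha] at i2
  rw [show C.e*b = b from hb] at i3
  have hta : C.Mh (t*a) := by rw [mul_comm]; exact C.mul1h ha ht
  have htb : C.Mh (t*b) := by rw [mul_comm]; exact C.mul1h hb ht
  have e4 : C.D (t*(a+b)) = C.D (t*a) + C.D (t*b) := by
    rw [mul_add]; exact C.MhAdd hta htb
  have e5 : C.D t * (a+b) + t*(C.e*C.D (a+b))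
      = (C.D t * a + t*(C.e*C.D a)) + (C.D t * b + t*(C.e*C.D b)) := by
    calc C.D t * (a+b) + t*(C.e*C.D (a+b)) = C.D (t*(a+b)) := i1.symm
      _ = C.D (t*a) + C.D (t*b) := e4
      _ = _ := by rw [i2, i3]
  have e7 : C.D t * (a+b) = C.D t * a + C.D t * b := mul_add _ _ _
  have e6 : t*(C.e*C.D (a+b)) - t*(C.e*C.D a) - t*(C.e*C.D b) = 0 := by
    calc t*(C.e*C.D (a+b)) - t*(C.e*C.D a) - t*(C.e*C.D b)
        = (C.D t * (a+b) + t*(C.e*C.D (a+b)))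
          - ((C.D t * a + t*(C.e*C.D a)) + (C.D t * b + t*(C.e*C.D b)))
          + (C.D t * a + C.D t * b - C.D t * (a+b)) := by abel
      _ = 0 := by rw [e5, e7]; abel
  have hfin : t * (C.e * C.dd a b) = 0 := by
    show t * (C.e * (C.D (a+b) - C.D a - C.D b)) = 0
    rw [mul_sub C.e, mul_sub C.e, mul_sub t, mul_sub t]
    exact e6
  rwa [show C.e * C.dd a b = C.dd a b from hδ] at hfin

/-- additivity on J₀ -/
lemma finale0 {q q' : J} (hq : C.M0 q) (hq' : C.M0 q') :
    C.D (q + q') = C.D q + C.D q' := by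
  suffices hdd : C.dd q q' = 0 from C.addD hdd
  have hδ : C.M0 (C.dd q q') :=
    C.M0_sub (C.M0_sub (C.DM0 (C.M0_add hq hq')) (C.DM0 hq)) (C.DM0 hq')
  apply C.hc1' _ hδ
  intro t ht
  set k := C.n - 2 with hk
  have j1 := C.Wprime t (q+q')
  have j2 := C.Wprime t q
  have j3 := C.Wprime t q'
  have htq : C.Mh (C.Rit k (t*q)) := by
    apply C.Rit_Mh
    rw [mul_comm]; exact C.mul0h hq ht
  have htq' : C.Mh (C.Rit k (t*q')) := by
    apply C.Rit_Mh
    rw [mul_comm]; exact C.mul0h hq' ht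
  have hMh : C.D (C.Rit k (t*q) + C.Rit k (t*q'))
      = C.D (C.Rit k (t*q)) + C.D (C.Rit k (t*q')) := C.MhAdd htq htq'
  have hval : C.Rit k (t*(q+q')) = C.Rit k (t*q) + C.Rit k (t*q') := by
    rw [mul_add, C.Rit_add]
  have hDtpart : C.Rit k (C.D t*(q+q')) - C.Rit k (C.D t*q) - C.Rit k (C.D t*q') = 0 := by
    rw [← C.Rit_sub, ← C.Rit_sub, mul_add (C.D t) q q',
        show C.D t*q + C.D t*q' - C.D t*q - C.D t*q' = 0 by abel, C.Rit_zero]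
  have htpart : C.Rit k (t*C.D (q+q')) - C.Rit k (t*C.D q) - C.Rit k (t*C.D q')
      = C.Rit k (t * C.dd q q') := by
    rw [← C.Rit_sub, ← C.Rit_sub, ← mul_sub, ← mul_sub]
    rfl
  have hall : C.Rit k (C.D t*(q+q')) + C.Rit k (t*C.D (q+q'))
      = C.Rit k (C.D t*q) + C.Rit k (t*C.D q)
        + (C.Rit k (C.D t*q') + C.Rit k (t*C.D q')) := by
    calc C.Rit k (C.D t*(q+q')) + C.Rit k (t*C.D (q+q'))
        = C.D (C.Rit k (t*(q+q'))) := j1.symm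
      _ = C.D (C.Rit k (t*q) + C.Rit k (t*q')) := by rw [hval]
      _ = C.D (C.Rit k (t*q)) + C.D (C.Rit k (t*q')) := hMh
      _ = _ := by rw [j2, j3]
  have e6 : C.Rit k (t * C.dd q q') = 0 := by
    rw [← htpart]
    calc C.Rit k (t*C.D (q+q')) - C.Rit k (t*C.D q) - C.Rit k (t*C.D q')
        = (C.Rit k (C.D t*(q+q')) + C.Rit k (t*C.D (q+q')))
          - (C.Rit k (C.D t*q) + C.Rit k (t*C.D q)
            + (C.Rit k (C.D t*q') + C.Rit k (t*C.D q')))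
          - (C.Rit k (C.D t*(q+q')) - C.Rit k (C.D t*q) - C.Rit k (C.D t*q')) := by abel
      _ = 0 := by rw [hall, hDtpart]; abel
  have htd : C.Mh (t * C.dd q q') := by rw [mul_comm]; exact C.mul0h hδ ht
  have hsc := C.Rit_smul htd k
  rw [e6, smul_zero] at hsc
  exact hsc.symm

end Ctx

theorem nDer_additive_on_one_zero {n : ℕ} (hn : 2 ≤ n) {J : Type*} [NonUnitalNonAssocCommRing J]
    (hJordan : ∀ x y : J, ((x * x) * y) * x = (x * x) * (y * x))
    (h2 : ∀ x : J, x + x = 0 → x = 0)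
    (hn1 : ∀ x : J, (n - 1) • x = 0 → x = 0)
    (e : J) (hid : e * e = e) (hne : e ≠ 0) (hnu : ∃ x : J, e * x ≠ x)
    (hcond1 : ∀ a ∈ peirce1 e, (∀ t ∈ peirceHalf e, t * a = 0) → a = 0)
    (hcond1' : ∀ a ∈ peirce0 e, (∀ t ∈ peirceHalf e, t * a = 0) → a = 0)
    (hcond2 : ∀ a ∈ peirce0 e, (∀ t ∈ peirce0 e, t * a = 0) → a = 0)
    (hcond3 : ∀ a ∈ peirceHalf e, (∀ t ∈ peirce0 e, t * a = 0) → a = 0)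
    (D : J → J) (hder : IsNDer n D) (hDe : D e = 0) :
    (∀ a ∈ peirce1 e, ∀ b ∈ peirce1 e, D (a + b) = D a + D b) ∧
    (∀ a ∈ peirce0 e, ∀ b ∈ peirce0 e, D (a + b) = D a + D b) := by
  let C : Ctx J :=
    { n := n, hn := hn, e := e, hid := hid, hJ := hJordan, h2 := h2,
      hc1 := fun a ha h => hcond1 a ha (fun t ht => h t ht),
      hc1' := fun a ha h => hcond1' a ha (fun t ht => h t ht),
      hc2 := fun a ha h => hcond2 a ha (fun t ht => h t ht),
      hc3 := fun a ha h => hcond3 a ha (fun t ht => h t ht),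
      D := D, hder := hder, hDe := hDe }
  constructor
  · intro a ha b hb
    exact C.finale1 ha hb
  · intro a ha b hb
    exact C.finale0 ha hb
end
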